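/- arXiv:2208.01900 — 12 statements merged into one kernel-verified Lean document; each statement's English description precedes it below -/
import Mathlib

section
/- Let G be a finite cyclic group, H ≠ {e} a subgroup, and x ∈ H, y ∈ G \ H non-identity elements with the same set of prime divisors of their orders. Then deg(x) > deg(y) in the generalized non-coprime graph Γ_{G,H}. -/
/-- The generalized non-coprime graph of a group `G` with respect to a subgroup `H`:
vertices are the non-identity elements of `G`, and distinct vertices `a`, `b` are
adjacent iff `gcd(|a|,|b|) ≠ 1` and `a ∈ H` or `b ∈ H`. -/
def genNonCoprimeGraph (G : Type*) [Group G] (H : Subgroup G) :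
    SimpleGraph {x : G // x ≠ 1} where
  Adj a b := a ≠ b ∧ Nat.gcd (orderOf (a : G)) (orderOf (b : G)) ≠ 1 ∧
    ((a : G) ∈ H ∨ (b : G) ∈ H)
  symm := by
    constructor
    intro a b h
    exact ⟨h.1.symm, by rw [Nat.gcd_comm]; exact h.2.1, h.2.2.symm⟩
  loopless := by
    constructor
    intro a h
    exact h.1 rfl

theorem degree_lt_of_mem_notMem {G : Type*} [Group G] [Fintype G]
    (hG : IsCyclic G) (H : Subgroup G) (hH : H ≠ ⊥)
    (x y : {g : G // g ≠ 1}) (hxy : x ≠ y)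
    (hx : (x : G) ∈ H) (hy : (y : G) ∉ H)
    (hθ : {p : ℕ | p.Prime ∧ p ∣ orderOf (x : G)} =
          {p : ℕ | p.Prime ∧ p ∣ orderOf (y : G)}) :
    ((genNonCoprimeGraph G H).neighborSet y).ncard <
      ((genNonCoprimeGraph G H).neighborSet x).ncard := by
  classical
  haveI := hG
  set Γ := genNonCoprimeGraph G H with hΓ
  have hx1 : (x : G) ≠ 1 := x.2
  have hy1 : (y : G) ≠ 1 := y.2
  -- transfer of primes
  have hxθ : ∀ p : ℕ, p.Prime → p ∣ orderOf (x : G) → p ∣ orderOf (y : G) := by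
    intro p hp hd
    have : p ∈ {p : ℕ | p.Prime ∧ p ∣ orderOf (y : G)} := hθ ▸ ⟨hp, hd⟩
    exact this.2
  have hyθ : ∀ p : ℕ, p.Prime → p ∣ orderOf (y : G) → p ∣ orderOf (x : G) := by
    intro p hp hd
    have : p ∈ {p : ℕ | p.Prime ∧ p ∣ orderOf (x : G)} := hθ.symm ▸ ⟨hp, hd⟩
    exact this.2
  obtain ⟨p, hp, hpx⟩ := Nat.exists_prime_and_dvd (fun h => hx1 (orderOf_eq_one_iff.mp h))
  have hpy : p ∣ orderOf (y : G) := hxθ p hp hpx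
  have hgxy : Nat.gcd (orderOf (x : G)) (orderOf (y : G)) ≠ 1 := by
    intro h
    exact hp.ne_one (Nat.eq_one_of_dvd_one (h ▸ Nat.dvd_gcd hpx hpy))
  have htrans : ∀ n : ℕ, Nat.gcd (orderOf (y : G)) n ≠ 1 →
      Nat.gcd (orderOf (x : G)) n ≠ 1 := by
    intro n hn h1
    obtain ⟨q, hq, hqd⟩ := Nat.exists_prime_and_dvd hn
    have hqy : q ∣ orderOf (y : G) := hqd.trans (Nat.gcd_dvd_left _ _)
    have hqn : q ∣ n := hqd.trans (Nat.gcd_dvd_right _ _)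
    have hqx : q ∣ orderOf (x : G) := hyθ q hq hqy
    exact hq.ne_one (Nat.eq_one_of_dvd_one (h1 ▸ Nat.dvd_gcd hqx hqn))
  have hcoe_ne : (x : G) ≠ (y : G) := fun h => hxy (Subtype.coe_injective h)
  -- y⁻¹ ≠ y
  have hyy : (y : G)⁻¹ ≠ (y : G) := by
    intro h
    have hsq : (y : G) ^ 2 = 1 := by
      rw [sq]; nth_rewrite 2 [← h]; simp
    haveI : Fact (Nat.Prime 2) := ⟨Nat.prime_two⟩
    have hoy : orderOf (y : G) = 2 := orderOf_eq_prime hsq hy1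
    have h2x : 2 ∣ orderOf (x : G) := hyθ 2 Nat.prime_two (by rw [hoy])
    set w := (x : G) ^ (orderOf (x : G) / 2) with hw
    have hox_pos : 0 < orderOf (x : G) := orderOf_pos _
    have hw2 : w ^ 2 = 1 := by
      rw [hw, ← pow_mul, Nat.div_mul_cancel h2x, pow_orderOf_eq_one]
    have hwne1 : w ≠ 1 := by
      intro hh
      have hdvd : orderOf (x : G) ∣ orderOf (x : G) / 2 :=
        orderOf_dvd_of_pow_eq_one hh
      have hlt : orderOf (x : G) / 2 < orderOf (x : G) :=
        Nat.div_lt_self hox_pos one_lt_two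
      have hpos : 0 < orderOf (x : G) / 2 :=
        Nat.div_pos (Nat.le_of_dvd hox_pos h2x) two_pos
      exact absurd (Nat.le_of_dvd hpos hdvd) (not_le.mpr hlt)
    have hwH : w ∈ H := H.pow_mem hx _
    have hwy : w ≠ (y : G) := fun hh => hy (hh ▸ hwH)
    have hcard : ({1, (y : G), w} : Finset G).card = 3 := by
      rw [Finset.card_insert_of_notMem (by simp [Ne.symm hy1, Ne.symm hwne1]),
        Finset.card_insert_of_notMem (by simp [Ne.symm hwy])]
      simp
    have hle := IsCyclic.card_pow_eq_one_le (α := G) two_pos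
    have hsub : ({1, (y : G), w} : Finset G) ⊆
        Finset.univ.filter (fun a : G => a ^ 2 = 1) := by
      intro a ha
      simp only [Finset.mem_insert, Finset.mem_singleton] at ha
      rcases ha with rfl | rfl | rfl <;> simp [hsq, hw2, Finset.mem_filter]
    have := (Finset.card_le_card hsub).trans hle
    omega
  -- the exchanged element
  have hz0ne1 : (y : G)⁻¹ ≠ 1 := inv_ne_one.mpr hy1
  set z₀ : {g : G // g ≠ 1} := ⟨(y : G)⁻¹, hz0ne1⟩ with hz₀
  have hz0H : (z₀ : G) ∉ H := fun h => hy (by simpa [hz₀] using H.inv_mem h)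
  -- adjacency facts
  have hadjxy : Γ.Adj x y := ⟨hxy, hgxy, Or.inl hx⟩
  have hadjxz₀ : Γ.Adj x z₀ := by
    refine ⟨fun h => hz0H (h ▸ hx), ?_, Or.inl hx⟩
    show Nat.gcd (orderOf (x : G)) (orderOf (y : G)⁻¹) ≠ 1
    rwa [orderOf_inv]
  have hxNy : x ∈ Γ.neighborSet y := ⟨Ne.symm hxy, by rwa [Nat.gcd_comm], Or.inr hx⟩
  have hyNy : y ∉ Γ.neighborSet y := fun h => Γ.irrefl h
  have hssub : insert y (Γ.neighborSet y \ {x}) ⊂ Γ.neighborSet x := by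
    constructor
    · intro z hz
      rcases hz with rfl | ⟨hz, hzx⟩
      · exact hadjxy
      · obtain ⟨hzy, hg, hor⟩ := hz
        have hzH : (z : G) ∈ H := hor.resolve_left hy
        refine ⟨fun h => hzx (by simp [h.symm]), ?_, Or.inl hx⟩
        exact htrans _ hg
    · intro hsup
      have := hsup hadjxz₀
      rcases this with h | ⟨hz, _⟩
      · exact hyy (congrArg Subtype.val h)
      · obtain ⟨_, _, hor⟩ := hz
        exact hz0H (hor.resolve_left hy)
  calc (Γ.neighborSet y).ncard
      = (insert y (Γ.neighborSet y \ {x})).ncard :=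
        (Set.ncard_exchange hyNy hxNy).symm
    _ < (Γ.neighborSet x).ncard := Set.ncard_lt_ncard hssub (Set.toFinite _)
end

section
/- Let G be a finite cyclic group of order n ≥ 3 and H ≠ {e} a subgroup. For x ∈ H \ {e}, the degree of x in the generalized non-coprime graph Γ_{G,H} equals (∑_{d | n, d > 1, gcd(d,|x|) > 1} φ(d)) − 1, where φ is Euler's totient function. -/
theorem degree_of_mem_eq {G : Type*} [Group G] [Fintype G] [DecidableEq G]
    (hG : IsCyclic G) (hn : 3 ≤ Fintype.card G)
    (H : Subgroup G) (hH : H ≠ ⊥)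
    (x : {g : G // g ≠ 1}) (hx : (x : G) ∈ H) :
    ((genNonCoprimeGraph G H).neighborSet x).ncard =
      (∑ d ∈ (Fintype.card G).divisors.filter
          (fun d => 1 < d ∧ 1 < Nat.gcd d (orderOf (x : G))), Nat.totient d) - 1 := by
  classical
  haveI := hG
  set n := Fintype.card G with hn'
  set m := orderOf (x : G) with hm
  have hmne : m ≠ 1 := by
    rw [hm, Ne, orderOf_eq_one_iff]
    exact x.2
  have hmpos : 0 < m := orderOf_pos _
  have hm1 : 1 < m := lt_of_le_of_ne hmpos hmne.symm
  -- key counting lemma in G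
  have key : (Finset.univ.filter (fun y : G => Nat.gcd (orderOf y) m ≠ 1)).card
      = ∑ d ∈ n.divisors.filter (fun d => 1 < d ∧ 1 < Nat.gcd d m), Nat.totient d := by
    rw [Finset.card_eq_sum_card_fiberwise (f := fun y : G => orderOf y)
      (t := n.divisors.filter (fun d => 1 < d ∧ 1 < Nat.gcd d m)) ?_]
    · refine Finset.sum_congr rfl fun d hd => ?_
      simp only [Finset.mem_filter, Nat.mem_divisors] at hd
      rw [← IsCyclic.card_orderOf_eq_totient hd.1.1]
      congr 1
      ext y
      simp only [Finset.mem_filter, Finset.mem_univ, true_and]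
      constructor
      · rintro ⟨-, h⟩; exact h
      · intro h
        refine ⟨?_, h⟩
        rw [h]
        omega
    · intro y hy
      simp only [Finset.mem_coe, Finset.mem_filter, Finset.mem_univ, true_and, Nat.mem_divisors] at hy ⊢
      have h1 : orderOf y ≠ 1 := by
        intro h
        rw [h, Nat.gcd_one_left] at hy
        exact hy rfl
      have hpos : 0 < orderOf y := orderOf_pos _
      have hgcdpos : 0 < Nat.gcd (orderOf y) m := Nat.gcd_pos_of_pos_right _ hmpos
      exact ⟨⟨orderOf_dvd_card, by omega⟩, by omega, by omega⟩
  -- identify the image of the neighbor set in G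
  have himg : Subtype.val '' ((genNonCoprimeGraph G H).neighborSet x)
      = ↑((Finset.univ.filter (fun y : G => Nat.gcd (orderOf y) m ≠ 1)).erase (x : G)) := by
    ext y
    simp only [Set.mem_image, SimpleGraph.mem_neighborSet, Finset.coe_erase, Set.mem_diff,
      Finset.coe_filter, Set.mem_setOf_eq, Finset.mem_univ, true_and, Set.mem_singleton_iff]
    constructor
    · rintro ⟨b, hadj, rfl⟩
      obtain ⟨hne, hgcd, -⟩ := hadj
      refine ⟨by rwa [Nat.gcd_comm], ?_⟩
      intro h
      exact hne (Subtype.ext h.symm)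
    · rintro ⟨hgcd, hne⟩
      have hy1 : y ≠ 1 := by
        intro h
        rw [h, orderOf_one, Nat.gcd_one_left] at hgcd
        exact hgcd rfl
      refine ⟨⟨y, hy1⟩, ⟨?_, by rwa [Nat.gcd_comm], Or.inl hx⟩, rfl⟩
      intro h
      exact hne (congrArg Subtype.val h).symm
  have hinj := Set.ncard_image_of_injective
    ((genNonCoprimeGraph G H).neighborSet x) (Subtype.val_injective (p := fun g : G => g ≠ 1))
  have hxmem : (x : G) ∈ Finset.univ.filter (fun y : G => Nat.gcd (orderOf y) m ≠ 1) := by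
    simp only [Finset.mem_filter, Finset.mem_univ, true_and, ← hm, Nat.gcd_self]
    exact hmne
  rw [← hinj, himg, Set.ncard_coe_finset, Finset.card_erase_of_mem hxmem, key]
end

section
/- Let G be a finite cyclic group of order n ≥ 3 and H ≠ {e} a subgroup of order h. For x ∈ (G \ H) \ {e}, the degree of x in the generalized non-coprime graph Γ_{G,H} equals ∑_{d | h, d > 1, gcd(d,|x|) > 1} φ(d). -/
theorem degree_of_notMem_eq {G : Type*} [Group G] [Fintype G] [DecidableEq G]
    (hG : IsCyclic G) (hn : 3 ≤ Fintype.card G)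
    (H : Subgroup G) (hH : H ≠ ⊥)
    (x : {g : G // g ≠ 1}) (hx : (x : G) ∉ H) :
    ((genNonCoprimeGraph G H).neighborSet x).ncard =
      ∑ d ∈ (Nat.card H).divisors.filter
          (fun d => 1 < d ∧ 1 < Nat.gcd d (orderOf (x : G))), Nat.totient d := by
  classical
  haveI := hG
  haveI : IsCyclic H := Subgroup.isCyclic H
  -- Step 1: describe the neighbor set
  have hset : (genNonCoprimeGraph G H).neighborSet x =
      {y : {g : G // g ≠ 1} | (y : G) ∈ H ∧
        Nat.gcd (orderOf (y : G)) (orderOf (x : G)) ≠ 1} := by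
    ext y
    simp only [SimpleGraph.mem_neighborSet, genNonCoprimeGraph, Set.mem_setOf_eq]
    constructor
    · rintro ⟨hne, hgcd, hmem⟩
      rcases hmem with h | h
      · exact absurd h hx
      · exact ⟨h, by rwa [Nat.gcd_comm]⟩
    · rintro ⟨hmem, hgcd⟩
      refine ⟨?_, by rwa [Nat.gcd_comm], Or.inr hmem⟩
      rintro rfl; exact hx hmem
  rw [hset]
  -- Step 2: transfer the count to a finset in H
  have hcard : {y : {g : G // g ≠ 1} | (y : G) ∈ H ∧
        Nat.gcd (orderOf (y : G)) (orderOf (x : G)) ≠ 1}.ncard =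
      (Finset.univ.filter (fun g : H => orderOf g ≠ 1 ∧
        Nat.gcd (orderOf g) (orderOf (x : G)) ≠ 1)).card := by
    have e : {y : {g : G // g ≠ 1} | (y : G) ∈ H ∧
        Nat.gcd (orderOf (y : G)) (orderOf (x : G)) ≠ 1} ≃
        {g : H // orderOf g ≠ 1 ∧ Nat.gcd (orderOf g) (orderOf (x : G)) ≠ 1} := by
      refine ⟨fun y => ⟨⟨(y.1 : G), y.2.1⟩, ?_⟩, fun g => ⟨⟨(g.1 : G), ?_⟩, ?_⟩, ?_, ?_⟩
      · rw [Subgroup.orderOf_mk]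
        exact ⟨fun h => y.1.2 (orderOf_eq_one_iff.mp h), y.2.2⟩
      · intro h
        exact g.2.1 (by rw [← Subgroup.orderOf_coe, h, orderOf_one])
      · exact ⟨g.1.2, by rw [Subgroup.orderOf_coe]; exact g.2.2⟩
      · intro y; rfl
      · intro g; rfl
    rw [← Nat.card_coe_set_eq, Nat.card_congr e, Nat.card_eq_fintype_card,
      Fintype.card_subtype]
  rw [hcard]
  -- Step 3: count fiberwise by order
  have hcardH : Nat.card H = Fintype.card H := Nat.card_eq_fintype_card
  rw [Finset.card_eq_sum_card_fiberwise
      (f := fun g : H => orderOf g)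
      (t := (Nat.card H).divisors.filter
        (fun d => 1 < d ∧ 1 < Nat.gcd d (orderOf (x : G))))]
  · apply Finset.sum_congr rfl
    intro d hd
    simp only [Finset.mem_filter, Nat.mem_divisors] at hd
    obtain ⟨⟨hdvd, hne0⟩, hd1, hdgcd⟩ := hd
    have : (Finset.univ.filter (fun g : H => orderOf g ≠ 1 ∧
        Nat.gcd (orderOf g) (orderOf (x : G)) ≠ 1)).filter (fun g => orderOf g = d) =
        Finset.univ.filter (fun g : H => orderOf g = d) := by
      ext g
      simp only [Finset.mem_filter, Finset.mem_univ, true_and]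
      constructor
      · exact fun h => h.2
      · intro h
        refine ⟨⟨?_, ?_⟩, h⟩
        · rw [h]; omega
        · rw [h]; omega
    rw [this]
    exact IsCyclic.card_orderOf_eq_totient (hcardH ▸ hdvd)
  · intro g hg
    simp only [Finset.mem_coe, Finset.mem_filter, Finset.mem_univ, true_and] at hg ⊢
    obtain ⟨hg1, hggcd⟩ := hg
    have hpos : 0 < orderOf g := orderOf_pos g
    have hdvd : orderOf g ∣ Nat.card H := by
      rw [hcardH]; exact orderOf_dvd_card
    have hgcdpos : 0 < Nat.gcd (orderOf g) (orderOf (x : G)) :=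
      Nat.gcd_pos_of_pos_left _ hpos
    refine ⟨Nat.mem_divisors.mpr ⟨hdvd, ?_⟩, by omega, by omega⟩
    rw [hcardH]
    exact Fintype.card_ne_zero
end

section
/- Let G be a finite cyclic group of order n ≥ 3 and H ≠ {e} a subgroup such that every prime divisor of n divides |H|. Then the maximum degree of the generalized non-coprime graph Γ_{G,H} equals |G| − 2. -/
lemma card_ne_one {G : Type*} [Group G] [Fintype G] :
    Nat.card {x : G // x ≠ 1} = Fintype.card G - 1 := by
  classical
  have h0 : Nat.card {x : G // x ≠ 1} = Nat.card ({x : G | x ≠ 1} : Set G) := rfl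
  rw [h0, Nat.card_coe_set_eq]
  have h1 : {x : G | x ≠ 1} = Set.univ \ {1} := by ext x; simp
  rw [h1, Set.ncard_diff_singleton_of_mem (Set.mem_univ _), Set.ncard_univ,
    Nat.card_eq_fintype_card]

theorem maxDegree_eq_card_sub_two {G : Type*} [Group G] [Fintype G]
    (hG : IsCyclic G) (hn : 3 ≤ Fintype.card G)
    (H : Subgroup G) (hH : H ≠ ⊥)
    (hdiv : ∀ p : ℕ, p.Prime → p ∣ Fintype.card G → p ∣ Nat.card H) :
    (∃ v : {g : G // g ≠ 1},
        ((genNonCoprimeGraph G H).neighborSet v).ncard = Fintype.card G - 2) ∧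
    (∀ v : {g : G // g ≠ 1},
        ((genNonCoprimeGraph G H).neighborSet v).ncard ≤ Fintype.card G - 2) := by
  classical
  -- card of vertex set
  have hV : Nat.card {x : G // x ≠ 1} = Fintype.card G - 1 := card_ne_one
  have hcompl : ∀ v : {x : G // x ≠ 1},
      Set.ncard {b : {x : G // x ≠ 1} | b ≠ v} = Fintype.card G - 2 := by
    intro v
    have h1 : {b : {x : G // x ≠ 1} | b ≠ v} = Set.univ \ {v} := by ext x; simp
    rw [h1, Set.ncard_diff_singleton_of_mem (Set.mem_univ _), Set.ncard_univ, hV]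
    omega
  constructor
  · -- generator of H
    obtain ⟨g, hg⟩ := (Subgroup.isCyclic H).exists_ofOrder_eq_natCard
    have hHcard : 1 < Nat.card H := by
      rcases Nat.lt_or_ge 1 (Nat.card H) with h | h
      · exact h
      · exfalso
        apply hH
        have : Nat.card H = 1 := by
          have := Nat.card_pos (α := H)
          omega
        exact Subgroup.eq_bot_of_card_eq H this
    have hg1 : (g : G) ≠ 1 := by
      intro h
      have : orderOf g = 1 := by
        have : g = 1 := Subtype.ext h
        simp [this]
      omega
    refine ⟨⟨(g : G), hg1⟩, ?_⟩
    have : (genNonCoprimeGraph G H).neighborSet ⟨(g : G), hg1⟩ =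
        {b : {x : G // x ≠ 1} | b ≠ ⟨(g : G), hg1⟩} := by
      ext b
      simp only [SimpleGraph.mem_neighborSet, genNonCoprimeGraph, Set.mem_setOf_eq]
      constructor
      · rintro ⟨h1, -, -⟩; exact h1.symm
      · intro hb
        refine ⟨hb.symm, ?_, Or.inl g.2⟩
        -- gcd condition
        have hb1 : orderOf (b : G) ≠ 1 := by
          simpa [orderOf_eq_one_iff] using b.2
        obtain ⟨p, hp, hpd⟩ := Nat.exists_prime_and_dvd hb1
        have hpG : p ∣ Fintype.card G := hpd.trans (orderOf_dvd_card)
        have hpH : p ∣ Nat.card H := hdiv p hp hpG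
        have hog : orderOf ((g : G)) = Nat.card H := by
          rw [Subgroup.orderOf_coe, hg]
        intro hgcd
        have : p ∣ Nat.gcd (orderOf (g : G)) (orderOf (b : G)) :=
          Nat.dvd_gcd (hog ▸ hpH) hpd
        rw [hgcd] at this
        exact hp.ne_one (Nat.dvd_one.mp this)
    rw [this, hcompl]
  · intro v
    have hsub : (genNonCoprimeGraph G H).neighborSet v ⊆
        {b : {x : G // x ≠ 1} | b ≠ v} := by
      intro b hb
      exact fun h => hb.1.symm (h ▸ rfl)
    calc ((genNonCoprimeGraph G H).neighborSet v).ncard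
        ≤ Set.ncard {b : {x : G // x ≠ 1} | b ≠ v} :=
          Set.ncard_le_ncard hsub (Set.toFinite _)
      _ = Fintype.card G - 2 := hcompl v
end

section
/- Let G be a finite cyclic group of order n ≥ 3 and H ≠ {e} a subgroup. The generalized non-coprime graph Γ_{G,H} is connected if and only if every prime divisor of n divides |H|. -/
theorem connected_iff {G : Type*} [Group G] [Fintype G]
    (hG : IsCyclic G) (hn : 3 ≤ Fintype.card G)
    (H : Subgroup G) (hH : H ≠ ⊥) :
    (genNonCoprimeGraph G H).Connected ↔
      ∀ p : ℕ, p.Prime → p ∣ Fintype.card G → p ∣ Nat.card H := by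
  haveI := hG
  constructor
  · intro hconn p hp hpn
    by_contra hpH
    haveI : Fact p.Prime := ⟨hp⟩
    obtain ⟨x, hx⟩ := exists_prime_orderOf_dvd_card p hpn
    have hx1 : x ≠ 1 := by
      intro h
      rw [h, orderOf_one] at hx
      exact hp.one_lt.ne hx
    have hxH : x ∉ H := by
      intro hxH
      apply hpH
      rw [← hx, ← Subgroup.orderOf_mk x hxH]
      exact orderOf_dvd_natCard _
    have hiso : ∀ b, ¬ (genNonCoprimeGraph G H).Adj ⟨x, hx1⟩ b := by
      rintro b ⟨-, hgcd, hmem⟩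
      rcases hmem with hm | hm
      · exact hxH hm
      · apply hpH
        have hpb : p ∣ orderOf (b : G) := by
          by_contra hnd
          have hcop : Nat.Coprime p (orderOf (b : G)) := hp.coprime_iff_not_dvd.mpr hnd
          apply hgcd
          show Nat.gcd (orderOf x) (orderOf (b : G)) = 1
          rw [hx]
          exact hcop
        have hob : orderOf (b : G) ∣ Nat.card H := by
          rw [← Subgroup.orderOf_mk (b : G) hm]
          exact orderOf_dvd_natCard _
        exact hpb.trans hob
    obtain ⟨h, hhne⟩ := Subgroup.ne_bot_iff_exists_ne_one.mp hH
    have hh1 : (h : G) ≠ 1 := fun hc => hhne (by ext; simpa using hc)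
    have hne : (⟨x, hx1⟩ : {x : G // x ≠ 1}) ≠ ⟨(h : G), hh1⟩ := by
      intro hcontra
      apply hxH
      rw [Subtype.ext_iff] at hcontra
      simp only at hcontra
      rw [hcontra]; exact h.2
    obtain ⟨w⟩ := hconn.preconnected ⟨x, hx1⟩ ⟨(h : G), hh1⟩
    cases w with
    | nil => exact hne rfl
    | cons hadj _ => exact hiso _ hadj
  · intro hdvd
    obtain ⟨g, hg⟩ := (Subgroup.isCyclic H).exists_generator
    have hgcard : orderOf g = Nat.card H := orderOf_eq_card_of_forall_mem_zpowers hg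
    have hHcard : 1 < Nat.card H := by
      have h0 : Nat.card H ≠ 0 := Nat.card_pos.ne'
      have h1 : Nat.card H ≠ 1 := fun hc => hH (Subgroup.eq_bot_of_card_eq H hc)
      omega
    have hg1 : (g : G) ≠ 1 := by
      intro hcontra
      have : orderOf g = 1 := by
        rw [← Subgroup.orderOf_coe, hcontra, orderOf_one]
      omega
    have key : ∀ a : {x : G // x ≠ 1}, a ≠ ⟨(g : G), hg1⟩ →
        (genNonCoprimeGraph G H).Adj a ⟨(g : G), hg1⟩ := by
      intro a hane
      refine ⟨hane, ?_, Or.inr g.2⟩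
      have ha1 : orderOf (a : G) ≠ 1 := fun hc => a.2 (orderOf_eq_one_iff.mp hc)
      obtain ⟨q, hq, hqa⟩ := Nat.exists_prime_and_dvd ha1
      have hqn : q ∣ Fintype.card G := hqa.trans orderOf_dvd_card
      have hqH : q ∣ Nat.card H := hdvd q hq hqn
      have hqg : q ∣ Nat.gcd (orderOf (a : G)) (orderOf ((g : G) : G)) := by
        apply Nat.dvd_gcd hqa
        rw [Subgroup.orderOf_coe, hgcard]
        exact hqH
      intro hcontra
      rw [hcontra] at hqg
      exact hq.one_lt.ne' (Nat.eq_one_of_dvd_one hqg)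
    rw [SimpleGraph.connected_iff_exists_forall_reachable]
    refine ⟨⟨(g : G), hg1⟩, fun w => ?_⟩
    rcases eq_or_ne w ⟨(g : G), hg1⟩ with hw | hw
    · rw [hw]
    · exact ((key w hw).symm).reachable
end

section
/- Let G be a finite cyclic group of order n ≥ 3 and H ≠ {e} a subgroup. Then the generalized non-coprime graph Γ_{G,H} is the complete graph on |G| − 1 vertices if and only if G is a p-group for some prime p and H = G. -/
theorem complete_iff {G : Type*} [Group G] [Fintype G]
    (hG : IsCyclic G) (hn : 3 ≤ Fintype.card G)
    (H : Subgroup G) (hH : H ≠ ⊥) :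
    genNonCoprimeGraph G H = ⊤ ↔
      (∃ p : ℕ, p.Prime ∧ IsPGroup p G) ∧ H = ⊤ := by
  have hcard0 : Fintype.card G ≠ 0 := Fintype.card_ne_zero
  constructor
  · intro h
    have hadj : ∀ a b : {x : G // x ≠ 1}, a ≠ b →
        Nat.gcd (orderOf (a : G)) (orderOf (b : G)) ≠ 1 ∧
        ((a : G) ∈ H ∨ (b : G) ∈ H) := by
      intro a b hab
      have : (genNonCoprimeGraph G H).Adj a b := by
        rw [h]; exact hab
      exact this.2
    -- p-group part
    set p := (Fintype.card G).minFac with hp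
    have hpprime : p.Prime := Nat.minFac_prime (by omega)
    have huniq : ∀ {q : ℕ}, q.Prime → q ∣ Fintype.card G → q = p := by
      intro q hq hqdvd
      by_contra hne
      haveI := Fact.mk hpprime
      haveI := Fact.mk hq
      obtain ⟨a, ha⟩ := exists_prime_orderOf_dvd_card p (Nat.minFac_dvd _)
      obtain ⟨b, hb⟩ := exists_prime_orderOf_dvd_card q hqdvd
      have ha1 : a ≠ 1 := by
        intro h1; rw [h1, orderOf_one] at ha; exact hpprime.one_lt.ne ha
      have hb1 : b ≠ 1 := by
        intro h1; rw [h1, orderOf_one] at hb; exact hq.one_lt.ne hb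
      have hab : (⟨a, ha1⟩ : {x : G // x ≠ 1}) ≠ ⟨b, hb1⟩ := by
        intro he
        have : a = b := congrArg Subtype.val he
        rw [this, hb] at ha
        exact hne ha
      have := (hadj ⟨a, ha1⟩ ⟨b, hb1⟩ hab).1
      simp only [ha, hb] at this
      exact this ((Nat.coprime_primes hpprime hq).2 (Ne.symm hne))
    have hpow : Nat.card G = p ^ (Fintype.card G).primeFactorsList.length := by
      rw [Nat.card_eq_fintype_card]
      exact Nat.eq_prime_pow_of_unique_prime_dvd hcard0 huniq
    refine ⟨⟨p, hpprime, IsPGroup.of_card hpow⟩, ?_⟩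
    -- H = ⊤
    obtain ⟨g, hg⟩ := hG.exists_generator
    have hgord : orderOf g = Fintype.card G := by
      rw [← Nat.card_eq_fintype_card]
      exact orderOf_eq_card_of_forall_mem_zpowers hg
    have hg1 : g ≠ 1 := by
      intro h1; rw [h1, orderOf_one] at hgord; omega
    have hgH : g ∈ H := by
      by_contra hgH
      -- g⁻¹ ≠ g since orderOf g ≥ 3
      have hinv : g⁻¹ ≠ g := by
        intro he
        have h2 : g ^ 2 = 1 := by
          rw [pow_two]; nth_rewrite 2 [← he]; simp
        have hdvd := orderOf_dvd_of_pow_eq_one h2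
        rw [hgord] at hdvd
        have := Nat.le_of_dvd (by norm_num) hdvd
        omega
      have hginv1 : g⁻¹ ≠ 1 := by simpa using hg1
      have hab : (⟨g, hg1⟩ : {x : G // x ≠ 1}) ≠ ⟨g⁻¹, hginv1⟩ := by
        intro he
        exact hinv (congrArg Subtype.val he).symm
      have := (hadj ⟨g, hg1⟩ ⟨g⁻¹, hginv1⟩ hab).2
      rcases this with h' | h'
      · exact hgH h'
      · exact hgH (by simpa using H.inv_mem h')
    rw [eq_top_iff]
    intro x _
    obtain ⟨k, hk⟩ := hg x
    rw [← hk]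
    exact H.zpow_mem hgH k
  · rintro ⟨⟨p, hp, hpg⟩, rfl⟩
    ext a b
    simp only [genNonCoprimeGraph, SimpleGraph.top_adj]
    constructor
    · intro h; exact h.1
    · intro hab
      haveI := Fact.mk hp
      refine ⟨hab, ?_, Or.inl (Subgroup.mem_top _)⟩
      obtain ⟨ka, hka⟩ := (IsPGroup.iff_orderOf.1 hpg) (a : G)
      obtain ⟨kb, hkb⟩ := (IsPGroup.iff_orderOf.1 hpg) (b : G)
      have ha1 : orderOf (a : G) ≠ 1 := by
        simpa [orderOf_eq_one_iff] using a.2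
      have hb1 : orderOf (b : G) ≠ 1 := by
        simpa [orderOf_eq_one_iff] using b.2
      have hpa : p ∣ orderOf (a : G) := by
        rw [hka] at ha1 ⊢
        exact dvd_pow_self p (fun h => ha1 (by simp [h]))
      have hpb : p ∣ orderOf (b : G) := by
        rw [hkb] at hb1 ⊢
        exact dvd_pow_self p (fun h => hb1 (by simp [h]))
      intro hgcd
      exact hp.one_lt.ne' (Nat.dvd_one.1 (hgcd ▸ Nat.dvd_gcd hpa hpb))
end

section
/- Let G be a finite cyclic group of order n ≥ 3 and H ≠ {e} a subgroup. Then the generalized non-coprime graph Γ_{G,H} is a star graph if and only if either (G is a 2-group and H ≅ Z_2) or (G = H ≅ Z_3). -/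
private lemma aux_two_dvd {m k : ℕ} (hd : m ∣ 2 ^ k) (hm : m ≠ 1) : 2 ∣ m := by
  obtain ⟨p, hp, hpm⟩ := Nat.exists_prime_and_dvd hm
  have hp2 : p = 2 :=
    (Nat.prime_dvd_prime_iff_eq hp Nat.prime_two).mp (hp.dvd_of_dvd_pow (hpm.trans hd))
  exact hp2 ▸ hpm

theorem star_iff {G : Type*} [Group G] [Fintype G]
    (hG : IsCyclic G) (hn : 3 ≤ Fintype.card G)
    (H : Subgroup G) (hH : H ≠ ⊥) :
    (∃ v : {g : G // g ≠ 1}, (∃ w, w ≠ v) ∧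
        (∀ w, w ≠ v → (genNonCoprimeGraph G H).Adj v w) ∧
        (∀ w w', (genNonCoprimeGraph G H).Adj w w' → w = v ∨ w' = v)) ↔
      (IsPGroup 2 G ∧ Nat.card H = 2) ∨ (H = ⊤ ∧ Fintype.card G = 3) := by
  classical
  constructor
  · rintro ⟨v, ⟨w₀, hw₀⟩, hadj, hstar⟩
    -- Step 1 : the center lies in H
    have hvH : (v : G) ∈ H := by
      by_contra hv
      have hall : ∀ g : G, g ≠ ↑v → g ∈ H := by
        intro g hg
        by_cases h1 : g = 1
        · rw [h1]; exact H.one_mem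
        · have hne : (⟨g, h1⟩ : {x : G // x ≠ 1}) ≠ v := fun h => hg (congrArg Subtype.val h)
          exact ((hadj ⟨g, h1⟩ hne).2.2).resolve_left hv
      have hsub : ({(↑v : G)}ᶜ : Set G) ⊆ (H : Set G) := fun g hg => hall g hg
      have h1 : ({(↑v : G)}ᶜ : Set G).ncard ≤ (H : Set G).ncard :=
        Set.ncard_le_ncard hsub (Set.toFinite _)
      have h2 : ({(↑v : G)} : Set G).ncard + ({(↑v : G)}ᶜ : Set G).ncard = Nat.card G :=
        Set.ncard_add_ncard_compl _
      rw [Set.ncard_singleton] at h2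
      have h3 : (H : Set G).ncard = Nat.card H := (Nat.card_coe_set_eq _).symm
      have hdvd : Nat.card H ∣ Nat.card G := Subgroup.card_subgroup_dvd_card H
      have hcardG : Nat.card G = Fintype.card G := Nat.card_eq_fintype_card
      have hne : Nat.card H ≠ Nat.card G := by
        intro h
        exact hv ((Subgroup.eq_top_of_card_eq H h) ▸ Subgroup.mem_top (↑v : G))
      obtain ⟨c, hc⟩ := hdvd
      have hc2 : 2 ≤ c := by
        rcases Nat.lt_or_ge c 2 with h | h
        · interval_cases c <;> omega
        · exact h
      have := Nat.mul_le_mul_left (Nat.card H) hc2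
      omega
    have hov : orderOf (v : G) ≠ 1 := fun h => v.2 (orderOf_eq_one_iff.mp h)
    by_cases hv2 : orderOf (v : G) = 2
    · -- the 2-group case
      left
      have hqs : ∀ q : ℕ, q.Prime → q ∣ Fintype.card G → q = 2 := by
        intro q hq hqd
        by_contra hq2
        haveI := Fact.mk hq
        obtain ⟨g, hg⟩ := exists_prime_orderOf_dvd_card q hqd
        have hg1 : g ≠ 1 := fun h => hq.ne_one (by rw [← hg, h, orderOf_one])
        have hgv : (⟨g, hg1⟩ : {x : G // x ≠ 1}) ≠ v := by
          intro h
          apply hq2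
          have hgv0 : g = ↑v := congrArg Subtype.val h
          rw [← hg, hgv0, hv2]
        have hgcd := (hadj ⟨g, hg1⟩ hgv).2.1
        rw [hv2, hg] at hgcd
        exact hgcd ((Nat.coprime_primes Nat.prime_two hq).mpr (Ne.symm hq2))
      have hpos : Fintype.card G ≠ 0 := by omega
      have hcard2 := Nat.eq_prime_pow_of_unique_prime_dvd hpos
        (fun {d} hd hdvd => hqs d hd hdvd)
      haveI := Fact.mk Nat.prime_two
      have hPG : IsPGroup 2 G := by
        rw [IsPGroup.iff_card]
        exact ⟨_, by rw [Nat.card_eq_fintype_card]; exact hcard2⟩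
      refine ⟨hPG, ?_⟩
      have hdvdH : Nat.card H ∣ 2 ^ (Fintype.card G).primeFactorsList.length := by
        rw [← hcard2, ← Nat.card_eq_fintype_card]
        exact Subgroup.card_subgroup_dvd_card H
      have hH1 : Nat.card H ≠ 1 := fun h => hH (Subgroup.card_eq_one.mp h)
      have horder2 : ∀ g : G, g ≠ 1 → 2 ∣ orderOf g := by
        intro g hg
        refine aux_two_dvd (k := (Fintype.card G).primeFactorsList.length) ?_
          (fun h => hg (orderOf_eq_one_iff.mp h))
        rw [← hcard2]
        exact orderOf_dvd_card
      -- card H ≤ 3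
      have hle3 : Nat.card H ≤ 3 := by
        by_contra hge
        push_neg at hge
        set S : Finset G := (H : Set G).toFinset \ {1, ↑v} with hS
        have hcards : Nat.card H ≤ S.card + 2 := by
          have h1 : ((H : Set G).toFinset).card ≤ S.card + ({1, (↑v : G)} : Finset G).card :=
            Finset.card_le_card_sdiff_add_card
          have h2 : ({1, (↑v : G)} : Finset G).card ≤ 2 :=
            (Finset.card_insert_le _ _).trans (by simp)
          have h3 : ((H : Set G).toFinset).card = Nat.card H := by
            rw [Set.toFinset_card, ← Nat.card_eq_fintype_card]
            rfl
          omega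
        have h2S : 1 < S.card := by omega
        obtain ⟨a, haS, b, hbS, hab⟩ := Finset.one_lt_card.mp h2S
        simp only [hS, Finset.mem_sdiff, Set.mem_toFinset, SetLike.mem_coe,
          Finset.mem_insert, Finset.mem_singleton, not_or] at haS hbS
        obtain ⟨haH, ha1, hav⟩ := haS
        obtain ⟨hbH, hb1, hbv⟩ := hbS
        have hadjab : (genNonCoprimeGraph G H).Adj ⟨a, ha1⟩ ⟨b, hb1⟩ := by
          refine ⟨fun h => hab (congrArg Subtype.val h), ?_, Or.inl haH⟩
          intro hgcd
          have := Nat.dvd_gcd (horder2 a ha1) (horder2 b hb1)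
          rw [hgcd] at this
          omega
        rcases hstar _ _ hadjab with h | h
        · exact hav (congrArg Subtype.val h)
        · exact hbv (congrArg Subtype.val h)
      have h2H : 2 ∣ Nat.card H := aux_two_dvd hdvdH hH1
      have hposH : 0 < Nat.card H := Nat.card_pos
      omega
    · -- the order-3 case
      right
      have hov3 : 3 ≤ orderOf (v : G) := by
        have := orderOf_pos (v : G)
        omega
      have hvinv1 : (↑v : G)⁻¹ ≠ 1 := fun h => v.2 (inv_eq_one.mp h)
      have hvv : ((↑v : G)⁻¹ : G) ≠ ↑v := by
        intro h
        have h2 : orderOf (v : G) ∣ 2 := by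
          apply orderOf_dvd_of_pow_eq_one
          rw [pow_two]
          nth_rewrite 1 [← h]
          exact inv_mul_cancel _
        have := Nat.le_of_dvd (by norm_num) h2
        omega
      set v' : {x : G // x ≠ 1} := ⟨(↑v : G)⁻¹, hvinv1⟩ with hv'
      have hv'v : v' ≠ v := fun h => hvv (congrArg Subtype.val h)
      have honly : ∀ w, w ≠ v → w = v' := by
        intro w hwv
        by_contra hwv'
        have h1 := hadj w hwv
        have hadjw : (genNonCoprimeGraph G H).Adj w v' := by
          refine ⟨hwv', ?_, Or.inr (H.inv_mem hvH)⟩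
          show Nat.gcd (orderOf (w : G)) (orderOf ((↑v : G)⁻¹)) ≠ 1
          rw [orderOf_inv, Nat.gcd_comm]
          exact h1.2.1
        rcases hstar _ _ hadjw with h | h
        · exact hwv h
        · exact hv'v h
      have hsub : (Finset.univ : Finset G) ⊆ {1, ↑v, (↑v : G)⁻¹} := by
        intro g _
        by_cases h1 : g = 1
        · simp [h1]
        by_cases h2 : g = ↑v
        · simp [h2]
        have := honly ⟨g, h1⟩ (fun h => h2 (congrArg Subtype.val h))
        have hg : g = (↑v : G)⁻¹ := congrArg Subtype.val this
        simp [hg]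
      have hle : Fintype.card G ≤ 3 := by
        have h1 := Finset.card_le_card hsub
        rw [Finset.card_univ] at h1
        have h3 : ({1, ↑v, (↑v : G)⁻¹} : Finset G).card ≤ 3 :=
          (Finset.card_insert_le _ _).trans (by
            have := Finset.card_insert_le (↑v : G) ({(↑v : G)⁻¹} : Finset G)
            simp only [Finset.card_singleton] at this
            omega)
        omega
      have hcard3 : Fintype.card G = 3 := le_antisymm hle hn
      refine ⟨?_, hcard3⟩
      have hd : Nat.card H ∣ 3 := by
        rw [← hcard3, ← Nat.card_eq_fintype_card]
        exact Subgroup.card_subgroup_dvd_card H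
      rcases (Nat.prime_three.eq_one_or_self_of_dvd _ hd) with h | h
      · exact absurd (Subgroup.card_eq_one.mp h) hH
      · exact Subgroup.eq_top_of_card_eq H (by rw [h, Nat.card_eq_fintype_card, hcard3])
  · rintro (⟨hPG, hH2⟩ | ⟨hHtop, hc3⟩)
    · -- 2-group with |H| = 2
      haveI := Fact.mk Nat.prime_two
      obtain ⟨k, hk⟩ := IsPGroup.iff_card.mp hPG
      rw [Nat.card_eq_fintype_card] at hk
      obtain ⟨t, htH, ht1⟩ := H.bot_or_exists_ne_one.resolve_left hH
      have hft : Fintype.card H = 2 := by rw [← Nat.card_eq_fintype_card]; exact hH2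
      have huniq : ∀ g : G, g ∈ H → g ≠ 1 → g = t := by
        intro g hg hg1
        by_contra hgt
        have hcard : ({(⟨1, H.one_mem⟩ : H), ⟨t, htH⟩, ⟨g, hg⟩} : Finset H).card = 3 := by
          rw [Finset.card_insert_of_notMem (by
              simp only [Finset.mem_insert, Finset.mem_singleton, Subtype.mk.injEq, not_or]
              exact ⟨Ne.symm ht1, Ne.symm hg1⟩),
            Finset.card_insert_of_notMem (by
              simp only [Finset.mem_singleton, Subtype.mk.injEq]
              exact fun h => hgt h.symm),
            Finset.card_singleton]
        have := Finset.card_le_univ ({(⟨1, H.one_mem⟩ : H), ⟨t, htH⟩, ⟨g, hg⟩} : Finset H)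
        rw [hcard, hft] at this
        omega
      have horder2 : ∀ g : G, g ≠ 1 → 2 ∣ orderOf g := by
        intro g hg
        refine aux_two_dvd (k := k) ?_ (fun h => hg (orderOf_eq_one_iff.mp h))
        rw [← hk]
        exact orderOf_dvd_card
      refine ⟨⟨t, ht1⟩, ?_, ?_, ?_⟩
      · -- a second vertex
        have hnsub : ¬(Finset.univ : Finset G) ⊆ {1, t} := by
          intro hsub
          have h1 := Finset.card_le_card hsub
          have h2 : ({1, t} : Finset G).card ≤ 2 :=
            (Finset.card_insert_le _ _).trans (by simp)
          rw [Finset.card_univ] at h1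
          omega
        rw [Finset.not_subset] at hnsub
        obtain ⟨g, -, hg⟩ := hnsub
        simp only [Finset.mem_insert, Finset.mem_singleton, not_or] at hg
        exact ⟨⟨g, hg.1⟩, fun h => hg.2 (congrArg Subtype.val h)⟩
      · intro w hwv
        refine ⟨Ne.symm hwv, ?_, Or.inl htH⟩
        intro hgcd
        have := Nat.dvd_gcd (horder2 t ht1) (horder2 (↑w : G) w.2)
        rw [hgcd] at this
        omega
      · intro w w' hadj
        rcases hadj.2.2 with h | h
        · exact Or.inl (Subtype.ext (huniq _ h w.2))
        · exact Or.inr (Subtype.ext (huniq _ h w'.2))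
    · -- G = H ≅ Z3
      have hnt : Nontrivial G := Fintype.one_lt_card_iff_nontrivial.mp (by omega)
      obtain ⟨v0, hv0⟩ := exists_ne (1 : G)
      have horder : ∀ g : G, g ≠ 1 → orderOf g = 3 := by
        intro g hg
        have hdvd : orderOf g ∣ 3 := by rw [← hc3]; exact orderOf_dvd_card
        have h1 : orderOf g ≠ 1 := fun h => hg (orderOf_eq_one_iff.mp h)
        rcases Nat.prime_three.eq_one_or_self_of_dvd _ hdvd with h | h
        · exact absurd h h1
        · exact h
      refine ⟨⟨v0, hv0⟩, ?_, ?_, ?_⟩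
      · have hnsub : ¬(Finset.univ : Finset G) ⊆ {1, v0} := by
          intro hsub
          have h1 := Finset.card_le_card hsub
          have h2 : ({1, v0} : Finset G).card ≤ 2 :=
            (Finset.card_insert_le _ _).trans (by simp)
          rw [Finset.card_univ] at h1
          omega
        rw [Finset.not_subset] at hnsub
        obtain ⟨g, -, hg⟩ := hnsub
        simp only [Finset.mem_insert, Finset.mem_singleton, not_or] at hg
        exact ⟨⟨g, hg.1⟩, fun h => hg.2 (congrArg Subtype.val h)⟩
      · intro w hwv
        refine ⟨Ne.symm hwv, ?_, Or.inl (by rw [hHtop]; trivial)⟩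
        rw [horder _ hv0, horder _ w.2]
        decide
      · intro w w' hadjww
        by_contra hcon
        push_neg at hcon
        obtain ⟨hw, hw'⟩ := hcon
        have hww' : (↑w : G) ≠ ↑w' := fun h => hadjww.1 (Subtype.ext h)
        have hwv : (↑w : G) ≠ v0 := fun h => hw (Subtype.ext h)
        have hw'v : (↑w' : G) ≠ v0 := fun h => hw' (Subtype.ext h)
        have hcard : ({1, v0, (↑w : G), (↑w' : G)} : Finset G).card = 4 := by
          rw [Finset.card_insert_of_notMem (by
              simp only [Finset.mem_insert, Finset.mem_singleton, not_or]
              exact ⟨Ne.symm hv0, Ne.symm w.2, Ne.symm w'.2⟩),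
            Finset.card_insert_of_notMem (by
              simp only [Finset.mem_insert, Finset.mem_singleton, not_or]
              exact ⟨fun h => hwv h.symm, fun h => hw'v h.symm⟩),
            Finset.card_insert_of_notMem (by
              simp only [Finset.mem_singleton]
              exact hww'),
            Finset.card_singleton]
        have := Finset.card_le_univ ({1, v0, (↑w : G), (↑w' : G)} : Finset G)
        rw [hcard, hc3] at this
        omega
end

section
/- Let G be a finite cyclic group of order n ≥ 3 and H ≠ {e} a subgroup. Then the generalized non-coprime graph Γ_{G,H} is a cycle if and only if H = G and G ≅ Z_4. -/
private lemma genNCG_adj_iff {G : Type*} [Group G] (H : Subgroup G)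
    (a b : {x : G // x ≠ 1}) :
    (genNonCoprimeGraph G H).Adj a b ↔ a ≠ b ∧
      Nat.gcd (orderOf (a : G)) (orderOf (b : G)) ≠ 1 ∧
      ((a : G) ∈ H ∨ (b : G) ∈ H) := Iff.rfl

private lemma arith_aux {n p : ℕ} (hp : p.Prime) (hd : p ∣ n) (h3 : 3 ≤ n)
    (hle : n - n / p ≤ 3) : n = 3 ∨ (n = 4 ∧ p = 2) ∨ (n = 6 ∧ p = 2) := by
  obtain ⟨m, rfl⟩ := hd
  have hp2 := hp.two_le
  rw [Nat.mul_div_cancel_left m (by omega)] at hle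
  have hm1 : 1 ≤ m := by nlinarith
  have hle' : p * m ≤ 3 + m := by omega
  have hm3 : m ≤ 3 := by nlinarith
  have hp6 : p ≤ 6 := by nlinarith
  interval_cases p <;> interval_cases m <;>
    first
      | omega
      | (exact absurd hp (by decide))

private lemma count_aux {G : Type*} [Group G] [Fintype G] (hG : IsCyclic G)
    {m : ℕ} (hm : 0 < m) :
    Fintype.card G - m ≤ {x : G | x ^ m ≠ 1}.ncard := by
  classical
  haveI := hG
  have h1 : {x : G | x ^ m = 1}.ncard ≤ m := by
    have h := IsCyclic.card_pow_eq_one_le (α := G) hm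
    rw [Set.ncard_eq_toFinset_card']
    simpa using h
  have h2 := Set.ncard_add_ncard_compl {x : G | x ^ m = 1}
  have hc : ({x : G | x ^ m = 1}ᶜ : Set G) = {x : G | x ^ m ≠ 1} := by
    ext x; simp
  rw [hc, Nat.card_eq_fintype_card] at h2
  omega

theorem cycle_iff {G : Type*} [Group G] [Fintype G]
    (hG : IsCyclic G) (hn : 3 ≤ Fintype.card G)
    (H : Subgroup G) (hH : H ≠ ⊥) :
    ((genNonCoprimeGraph G H).Connected ∧
      ∀ v : {g : G // g ≠ 1},
        ((genNonCoprimeGraph G H).neighborSet v).ncard = 2) ↔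
      (H = ⊤ ∧ Fintype.card G = 4) := by
  classical
  haveI : IsCyclic G := hG
  have hcards : Nat.card {x : G // x ≠ 1} = Fintype.card G - 1 := by
    rw [Nat.card_eq_fintype_card]
    have h : Fintype.card {x : G // ¬(x = 1)} =
        Fintype.card G - Fintype.card {x : G // x = 1} :=
      Fintype.card_subtype_compl _
    simpa [Fintype.card_subtype_eq] using h
  constructor
  · rintro ⟨hconn, hdeg⟩
    have key : ∀ h : G, h ∈ H → h ≠ 1 → ∀ p : ℕ, p.Prime → p ∣ orderOf h →
        Fintype.card G - Fintype.card G / p ≤ 3 := by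
      intro h hhH hh1 p hp hpo
      have hpn : p ∣ Fintype.card G := hpo.trans orderOf_dvd_card
      set n := Fintype.card G with hn'
      set m := n / p with hm'
      have hn0 : 0 < n := Fintype.card_pos
      have hm0 : 0 < m := Nat.div_pos (Nat.le_of_dvd hn0 hpn) hp.pos
      have hnm : p * m = n := Nat.mul_div_cancel' hpn
      set v : {x : G // x ≠ 1} := ⟨h, hh1⟩ with hv
      have hpord : ∀ x : G, x ^ m ≠ 1 → p ∣ orderOf x := by
        intro x hx
        by_contra hnd
        have hcop : Nat.Coprime (orderOf x) p :=
          (Nat.coprime_comm.mp (hp.coprime_iff_not_dvd.mpr hnd))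
        have h1 : orderOf x ∣ p * m := hnm ▸ orderOf_dvd_card
        have h2 : orderOf x ∣ m := hcop.dvd_of_dvd_mul_left h1
        exact hx (orderOf_dvd_iff_pow_eq_one.mp h2)
      have hsub : {x : {x : G // x ≠ 1} | (x : G) ^ m ≠ 1 ∧ x ≠ v} ⊆
          (genNonCoprimeGraph G H).neighborSet v := by
        rintro x ⟨hx1, hx2⟩
        refine (genNCG_adj_iff H v x).mpr ⟨Ne.symm hx2, ?_, Or.inl hhH⟩
        intro hgcd
        have h3 : p ∣ Nat.gcd (orderOf (h : G)) (orderOf (x : G)) :=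
          Nat.dvd_gcd hpo (hpord x hx1)
        rw [hgcd] at h3
        exact hp.one_lt.ne' (Nat.dvd_one.mp h3)
      have h5 : ({x : {x : G // x ≠ 1} | (x : G) ^ m ≠ 1 ∧ x ≠ v}).ncard ≤ 2 := by
        have h := Set.ncard_le_ncard hsub (Set.toFinite _)
        rwa [hdeg v] at h
      have himg : Subtype.val '' {x : {x : G // x ≠ 1} | (x : G) ^ m ≠ 1 ∧ x ≠ v}
          = {x : G | x ^ m ≠ 1} \ {h} := by
        ext x
        constructor
        · rintro ⟨y, ⟨hy1, hy2⟩, rfl⟩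
          exact ⟨hy1, fun hxh => hy2 (Subtype.ext hxh)⟩
        · rintro ⟨hx1, hx2⟩
          have hx0 : x ≠ 1 := by rintro rfl; exact hx1 (one_pow m)
          exact ⟨⟨x, hx0⟩, ⟨hx1, fun hh => hx2 (congrArg Subtype.val hh)⟩, rfl⟩
      have h6 : ({x : G | x ^ m ≠ 1} \ {h}).ncard ≤ 2 := by
        rw [← himg, Set.ncard_image_of_injective _ Subtype.val_injective]
        exact h5
      have h7 : {x : G | x ^ m ≠ 1}.ncard ≤ 3 := by
        have hsub2 : {x : G | x ^ m ≠ 1} ⊆ ({x : G | x ^ m ≠ 1} \ {h}) ∪ {h} := by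
          intro x hx
          by_cases hxh : x = h
          · exact Or.inr (by simp [hxh])
          · exact Or.inl ⟨hx, hxh⟩
        calc {x : G | x ^ m ≠ 1}.ncard
            ≤ (({x : G | x ^ m ≠ 1} \ {h}) ∪ {h}).ncard :=
              Set.ncard_le_ncard hsub2 (Set.toFinite _)
          _ ≤ ({x : G | x ^ m ≠ 1} \ {h}).ncard + ({h} : Set G).ncard :=
              Set.ncard_union_le _ _
          _ ≤ 3 := by rw [Set.ncard_singleton]; omega
      have h8 := count_aux hG hm0
      omega
    obtain ⟨h0, hh0⟩ := Subgroup.ne_bot_iff_exists_ne_one.mp hH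
    have hh0G : (h0 : G) ≠ 1 := by
      simpa using hh0
    have ho1 : orderOf (h0 : G) ≠ 1 := by simpa [orderOf_eq_one_iff] using hh0G
    have hp0 : (orderOf (h0 : G)).minFac.Prime := Nat.minFac_prime ho1
    have hd0 : (orderOf (h0 : G)).minFac ∣ orderOf (h0 : G) := Nat.minFac_dvd _
    have hkey0 := key (h0 : G) h0.2 hh0G _ hp0 hd0
    have hpn0 : (orderOf (h0 : G)).minFac ∣ Fintype.card G := hd0.trans orderOf_dvd_card
    obtain h3 | ⟨h4, -⟩ | ⟨h6, -⟩ := arith_aux hp0 hpn0 hn hkey0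
    · -- n = 3 : impossible, only 2 vertices
      exfalso
      set v : {x : G // x ≠ 1} := ⟨h0, hh0G⟩
      have hsubv : (genNonCoprimeGraph G H).neighborSet v ⊆ {v}ᶜ := by
        intro x hx
        exact Set.mem_compl_singleton_iff.mpr
          (((genNonCoprimeGraph G H).mem_neighborSet v x).mp hx).ne'
      have hle := Set.ncard_le_ncard hsubv (Set.toFinite _)
      rw [hdeg v] at hle
      have h := Set.ncard_add_ncard_compl ({v} : Set {x : G // x ≠ 1})
      rw [Set.ncard_singleton, hcards, h3] at h
      omega
    · -- n = 4 : prove H = ⊤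
      refine ⟨?_, h4⟩
      by_contra hHt
      have hdvd : Nat.card H ∣ 4 := by
        have h := Subgroup.card_subgroup_dvd_card H
        rwa [Nat.card_eq_fintype_card (α := G), h4] at h
      have h1' : Nat.card H ≠ 1 := fun h => hH (Subgroup.card_eq_one.mp h)
      have h4' : Nat.card H ≠ 4 := by
        intro h
        exact hHt ((Subgroup.card_eq_iff_eq_top H).mp
          (by rw [h, Nat.card_eq_fintype_card (α := G), h4]))
      have hH2 : Nat.card H = 2 := by
        have hle4 := Nat.le_of_dvd (by norm_num) hdvd
        have hpos : 0 < Nat.card H := Nat.card_pos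
        set k := Nat.card H with hk
        interval_cases k <;> first | rfl | omega | (norm_num at hdvd)
      have hsq : ∀ x : G, x ∈ H → x ^ 2 = 1 := by
        intro x hx
        have h := pow_card_eq_one (G := H) (x := ⟨x, hx⟩)
        rw [← Nat.card_eq_fintype_card, hH2] at h
        have h2 : ((⟨x, hx⟩ : H) ^ 2 : H) = (1 : H) := h
        simpa using congrArg (Subtype.val) h2
      obtain ⟨g, hg⟩ := hG.exists_generator
      have hog : orderOf g = 4 := by
        rw [orderOf_eq_card_of_forall_mem_zpowers hg, Nat.card_eq_fintype_card, h4]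
      have hgH : g ∉ H := by
        intro hgh
        have hdg := orderOf_dvd_of_pow_eq_one (hsq g hgh)
        rw [hog] at hdg
        norm_num at hdg
      have hg1 : g ≠ 1 := by
        intro h; rw [h, orderOf_one] at hog; omega
      set v : {x : G // x ≠ 1} := ⟨g, hg1⟩
      have hsubH : (genNonCoprimeGraph G H).neighborSet v ⊆
          {x : {x : G // x ≠ 1} | (x : G) ∈ H} := by
        intro x hx
        obtain ⟨-, -, hmem⟩ := (genNCG_adj_iff H v x).mp hx
        rcases hmem with h' | h'
        · exact absurd h' hgH
        · exact h'
      have himg2 : Subtype.val '' {x : {x : G // x ≠ 1} | (x : G) ∈ H} ⊆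
          (H : Set G) \ {1} := by
        rintro x ⟨y, hy, rfl⟩
        exact ⟨hy, y.2⟩
      have hcH : ((H : Set G) \ {1}).ncard = 1 := by
        rw [Set.ncard_diff_singleton_of_mem H.one_mem]
        rw [← Nat.card_coe_set_eq]
        rw [show Nat.card ((H : Set G) : Type _) = Nat.card H from rfl, hH2]
      have hle1 : ((genNonCoprimeGraph G H).neighborSet v).ncard ≤ 1 := by
        calc ((genNonCoprimeGraph G H).neighborSet v).ncard
            = (Subtype.val '' (genNonCoprimeGraph G H).neighborSet v).ncard :=
              (Set.ncard_image_of_injective _ Subtype.val_injective).symm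
          _ ≤ ((H : Set G) \ {1}).ncard :=
              Set.ncard_le_ncard
                (fun x hx => himg2 (Set.image_mono hsubH hx)) (Set.toFinite _)
          _ = 1 := hcH
      rw [hdeg v] at hle1
      omega
    · -- n = 6 : impossible
      exfalso
      have hP : ∀ x : G, x ∈ H → x ≠ 1 → ∀ q : ℕ, q.Prime → q ∣ orderOf x → q = 2 := by
        intro x hxH hx1 q hq hqd
        have hk := key x hxH hx1 q hq hqd
        have hqn : q ∣ Fintype.card G := hqd.trans orderOf_dvd_card
        obtain h' | ⟨h', hq2⟩ | ⟨h', hq2⟩ := arith_aux hq hqn hn hk <;> omega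
      haveI : Fact (Nat.Prime 3) := ⟨by norm_num⟩
      obtain ⟨b, hb⟩ := exists_prime_orderOf_dvd_card 3 (by rw [h6]; norm_num)
      have hb1 : b ≠ 1 := by
        intro h; rw [h, orderOf_one] at hb; omega
      set v : {x : G // x ≠ 1} := ⟨b, hb1⟩
      have hempty : (genNonCoprimeGraph G H).neighborSet v = ∅ := by
        ext x
        simp only [Set.mem_empty_iff_false, iff_false]
        intro hx
        obtain ⟨hne, hgcd, hmem⟩ := (genNCG_adj_iff H v x).mp hx
        rcases hmem with hbH | hxH
        · exact absurd (hP b hbH hb1 3 (by norm_num) (by rw [hb])) (by norm_num)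
        · have h3d : (3 : ℕ) ∣ orderOf (x : G) := by
            have hd3 : Nat.gcd (orderOf (b : G)) (orderOf (x : G)) ∣ 3 :=
              hb ▸ Nat.gcd_dvd_left _ _
            rcases (Nat.prime_three).eq_one_or_self_of_dvd _ hd3 with h' | h'
            · exact absurd h' hgcd
            · rw [← h']; exact Nat.gcd_dvd_right _ _
          exact absurd (hP x hxH x.2 3 (by norm_num) h3d) (by norm_num)
      have h := hdeg v
      rw [hempty] at h
      simp at h
  · rintro ⟨rfl, h4⟩
    have hord2 : ∀ x : {x : G // x ≠ 1}, 2 ∣ orderOf (x : G) := by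
      intro x
      have hdvd : orderOf (x : G) ∣ 4 := h4 ▸ orderOf_dvd_card
      have h1 : orderOf (x : G) ≠ 1 := by simpa [orderOf_eq_one_iff] using x.2
      have hgen : ∀ d : ℕ, d ∣ 4 → d ≠ 1 → 2 ∣ d := by
        intro d hd hd1
        have := Nat.le_of_dvd (by norm_num) hd
        interval_cases d <;> revert hd hd1 <;> decide
      exact hgen _ hdvd h1
    have hadj : ∀ a b : {x : G // x ≠ 1}, a ≠ b → (genNonCoprimeGraph G ⊤).Adj a b := by
      intro a b hab
      refine (genNCG_adj_iff ⊤ a b).mpr ⟨hab, ?_, Or.inl (Subgroup.mem_top _)⟩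
      intro hg
      have h2 : 2 ∣ Nat.gcd (orderOf (a : G)) (orderOf (b : G)) :=
        Nat.dvd_gcd (hord2 a) (hord2 b)
      rw [hg] at h2
      norm_num at h2
    have hne : Nonempty {x : G // x ≠ 1} := by
      obtain ⟨b, hb⟩ := Fintype.exists_ne_of_one_lt_card (by omega) (1 : G)
      exact ⟨⟨b, hb⟩⟩
    refine ⟨?_, fun v => ?_⟩
    · have hpre : (genNonCoprimeGraph G ⊤).Preconnected := by
        intro a b
        by_cases hab : a = b
        · subst hab
          exact SimpleGraph.Reachable.refl a
        · exact (hadj a b hab).reachable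
      haveI := hne
      exact ⟨hpre⟩
    · have hset : (genNonCoprimeGraph G ⊤).neighborSet v = {v}ᶜ := by
        ext x
        simp only [SimpleGraph.mem_neighborSet, Set.mem_compl_iff,
          Set.mem_singleton_iff]
        constructor
        · intro hx hxv
          exact hx.ne' hxv
        · intro hx
          exact hadj v x fun h => hx h.symm
      rw [hset]
      have h := Set.ncard_add_ncard_compl ({v} : Set {x : G // x ≠ 1})
      rw [Set.ncard_singleton, hcards, h4] at h
      omega
end

section
/- Let G be a finite cyclic group of order n ≥ 3 and H ≠ {e} a subgroup. Then the generalized non-coprime graph Γ_{G,H} contains exactly one cycle (is unicyclic) if and only if H = G and G ≅ Z_4. -/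
open SimpleGraph

section Helpers

variable {V : Type*}

lemma walk_support_eq_map_getVert {G : SimpleGraph V} {u v : V} (w : G.Walk u v) :
    w.support = (List.range (w.length + 1)).map w.getVert := by
  induction w with
  | nil => simp [Walk.getVert]
  | cons h p ih =>
    rw [Walk.support_cons, Walk.length_cons, List.range_succ_eq_map, List.map_cons, List.map_map]
    rw [ih]
    congr 1

lemma cycle_getVert_injOn {G : SimpleGraph V} {v : V} {w : G.Walk v v} (hw : w.IsCycle) :
    ∀ i < w.length, ∀ j < w.length, w.getVert (i + 1) = w.getVert (j + 1) → i = j := by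
  have h := hw.support_nodup
  rw [walk_support_eq_map_getVert, List.range_succ_eq_map, List.map_cons, List.map_map,
    List.tail_cons] at h
  intro i hi j hj hij
  exact List.inj_on_of_nodup_map h (List.mem_range.mpr hi) (List.mem_range.mpr hj) hij

lemma no_cycle_of_star {G : SimpleGraph V} (a : V)
    (hstar : ∀ x y, G.Adj x y → x = a ∨ y = a) {v : V} (w : G.Walk v v) : ¬ w.IsCycle := by
  intro hw
  have h3 := hw.three_le_length
  have inj := cycle_getVert_injOn hw
  have A0 : G.Adj (w.getVert 0) (w.getVert 1) := w.adj_getVert_succ (by omega)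
  have A1 : G.Adj (w.getVert 1) (w.getVert 2) := w.adj_getVert_succ (by omega)
  have A2 : G.Adj (w.getVert 2) (w.getVert 3) := w.adj_getVert_succ (by omega)
  have e0 : w.getVert 0 = w.getVert ((w.length - 1) + 1) := by
    rw [show w.length - 1 + 1 = w.length by omega, w.getVert_length, w.getVert_zero]
  have d02 : w.getVert 0 ≠ w.getVert 2 := by
    rw [e0]
    intro hh
    have := inj _ (by omega) 1 (by omega) hh
    omega
  have d13 : w.getVert 1 ≠ w.getVert 3 := by
    intro hh
    have := inj 0 (by omega) 2 (by omega) hh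
    omega
  rcases hstar _ _ A1 with h1 | h2
  · rcases hstar _ _ A2 with h2' | h3'
    · exact A1.ne (h1.trans h2'.symm)
    · exact d13 (h1.trans h3'.symm)
  · rcases hstar _ _ A0 with h0' | h1'
    · exact d02 (h0'.trans h2.symm)
    · exact A1.ne (h1'.trans h2.symm)

lemma triangle_isCycle {G : SimpleGraph V} {a b c : V} (hab : G.Adj a b) (hbc : G.Adj b c)
    (hca : G.Adj c a) :
    (Walk.cons hab (Walk.cons hbc (Walk.cons hca Walk.nil))).IsCycle := by
  have h1 := hab.ne
  have h2 := hbc.ne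
  have h3 := hca.ne
  rw [Walk.isCycle_def]
  refine ⟨⟨?_⟩, by simp, ?_⟩ <;>
    simp [Sym2.eq_iff, List.nodup_cons] <;> aesop

end Helpers

theorem unicyclic_iff {G : Type*} [Group G] [Fintype G]
    (hG : IsCyclic G) (hn : 3 ≤ Fintype.card G)
    (H : Subgroup G) (hH : H ≠ ⊥) :
    (∃! s : Set (Sym2 {g : G // g ≠ 1}),
        ∃ (v : {g : G // g ≠ 1}) (w : (genNonCoprimeGraph G H).Walk v v),
          w.IsCycle ∧ s = {e | e ∈ w.edges}) ↔
      (H = ⊤ ∧ Fintype.card G = 4) := by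
  classical
  constructor
  · rintro ⟨s, ⟨v, w, hw, hs⟩, huniq⟩
    obtain ⟨g, hg⟩ := hG.exists_generator
    have hog : orderOf g = Fintype.card G := by
      have := orderOf_eq_card_of_forall_mem_zpowers hg
      rwa [Nat.card_eq_fintype_card] at this
    set n := Fintype.card G with hndef
    have hd2 : 1 < Nat.card H := H.one_lt_card_iff_ne_bot.mpr hH
    have hdvd : Nat.card H ∣ n := by
      simpa [Nat.card_eq_fintype_card] using Subgroup.card_subgroup_dvd_card H
    have hdn : Nat.card H ≤ n := Nat.le_of_dvd (by omega) hdvd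
    -- Step A : 3 ≤ |H|
    have hd3 : 3 ≤ Nat.card H := by
      by_contra hlt
      push_neg at hlt
      letI : Fintype H := Fintype.ofFinite H
      haveI : Nontrivial H := Finite.one_lt_card_iff_nontrivial.mp hd2
      obtain ⟨⟨a, haH⟩, hane⟩ := exists_ne (1 : H)
      have ha1 : a ≠ 1 := fun h => hane (Subtype.ext h)
      have huniqH : ∀ x ∈ H, x ≠ 1 → x = a := by
        intro x hx hx1
        by_contra hxa
        have hcard : ({⟨1, H.one_mem⟩, ⟨a, haH⟩, ⟨x, hx⟩} : Finset H).card = 3 := by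
          rw [Finset.card_insert_of_notMem, Finset.card_insert_of_notMem,
            Finset.card_singleton]
          · simp only [Finset.mem_singleton]
            intro h
            exact hxa (congrArg Subtype.val h).symm
          · simp only [Finset.mem_insert, Finset.mem_singleton]
            rintro (h | h)
            · exact ha1 (congrArg Subtype.val h).symm
            · exact hx1 (congrArg Subtype.val h).symm
        have hle : ({⟨1, H.one_mem⟩, ⟨a, haH⟩, ⟨x, hx⟩} : Finset H).card ≤ Nat.card H := by
          rw [Nat.card_eq_fintype_card]
          exact Finset.card_le_univ _
        omega
      refine no_cycle_of_star (G := genNonCoprimeGraph G H) ⟨a, ha1⟩ ?_ w hw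
      rintro x y ⟨-, -, hxH | hyH⟩
      · exact Or.inl (Subtype.ext (huniqH _ hxH x.2))
      · exact Or.inr (Subtype.ext (huniqH _ hyH y.2))
    -- Step B : n ≤ 4
    have hn4 : n ≤ 4 := by
      by_contra h5'
      push_neg at h5'
      have h5 : 5 ≤ n := h5'
      have hgne : g ≠ 1 := by
        intro h
        rw [h, orderOf_one] at hog
        omega
      obtain ⟨u, huH, huord, hug, hugi⟩ :
          ∃ u, u ∈ H ∧ 2 < orderOf u ∧ u ≠ g ∧ u ≠ g⁻¹ := by
        rcases eq_or_lt_of_le hdn with heq | hlt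
        · have htop : H = ⊤ := H.eq_top_of_card_eq (by rw [heq, Nat.card_eq_fintype_card])
          refine ⟨g ^ 2, by simp [htop], ?_, ?_, ?_⟩
          · rcases (Nat.dvd_prime Nat.prime_two).mp (Nat.gcd_dvd_right (orderOf g) 2)
              with h | h
            · rw [orderOf_pow, h, Nat.div_one, hog]; omega
            · have h2n : 2 ∣ n := by
                rw [← hog]
                exact h ▸ Nat.gcd_dvd_left _ 2
              rw [orderOf_pow, h, hog]
              omega
          · intro h
            rw [sq, mul_eq_right] at h
            exact hgne h
          · intro h
            have h3 : g ^ 3 = 1 := by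
              rw [pow_succ, h, inv_mul_cancel]
            have hdd := orderOf_dvd_of_pow_eq_one h3
            rw [hog] at hdd
            have := Nat.le_of_dvd (by norm_num) hdd
            omega
        · obtain ⟨⟨h₀, hh₀H⟩, hgen⟩ := IsCyclic.exists_generator (α := H)
          have hord : orderOf h₀ = Nat.card H := by
            have := orderOf_eq_card_of_forall_mem_zpowers hgen
            rwa [Subgroup.orderOf_mk] at this
          refine ⟨h₀, hh₀H, by omega, ?_, ?_⟩
          · intro h
            rw [h, hog] at hord
            omega
          · intro h
            rw [h, orderOf_inv, hog] at hord
            omega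
      have hu1 : u ≠ 1 := by
        intro h
        rw [h, orderOf_one] at huord
        omega
      have hui1 : u⁻¹ ≠ 1 := by simpa using hu1
      have hgi1 : g⁻¹ ≠ 1 := by simpa using hgne
      have hudvd : orderOf u ∣ orderOf g := by
        rw [hog, hndef]
        exact orderOf_dvd_card
      have hggi : g ≠ g⁻¹ := by
        intro h
        have h2 : g ^ 2 = 1 := by
          rw [sq]
          nth_rw 2 [h]
          exact mul_inv_cancel g
        have := Nat.le_of_dvd (by norm_num) (orderOf_dvd_of_pow_eq_one h2)
        rw [hog] at this
        omega
      have huui : u ≠ u⁻¹ := by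
        intro h
        have h2 : u ^ 2 = 1 := by
          rw [sq]
          nth_rw 2 [h]
          exact mul_inv_cancel u
        have := Nat.le_of_dvd (by norm_num) (orderOf_dvd_of_pow_eq_one h2)
        omega
      have hguinv : g ≠ u⁻¹ := by
        intro h
        exact hugi (by rw [h, inv_inv])
      have hgiu : g⁻¹ ≠ u⁻¹ := by
        intro h
        exact hug (inv_injective h).symm
      have hogi : orderOf g⁻¹ = orderOf g := orderOf_inv g
      have houi : orderOf u⁻¹ = orderOf u := orderOf_inv u
      have key : ∀ a b : ℕ, orderOf u ∣ a → orderOf u ∣ b → Nat.gcd a b ≠ 1 := by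
        intro a b ha hb hh
        have hd := Nat.dvd_gcd ha hb
        rw [hh, Nat.dvd_one] at hd
        omega
      have Adj1 : (genNonCoprimeGraph G H).Adj ⟨g, hgne⟩ ⟨u, hu1⟩ :=
        ⟨fun h => hug (congrArg Subtype.val h).symm, key _ _ hudvd dvd_rfl, Or.inr huH⟩
      have Adj2 : (genNonCoprimeGraph G H).Adj ⟨u, hu1⟩ ⟨u⁻¹, hui1⟩ :=
        ⟨fun h => huui (congrArg Subtype.val h), key _ _ dvd_rfl (by rw [houi]),
          Or.inl huH⟩
      have Adj3 : (genNonCoprimeGraph G H).Adj ⟨u⁻¹, hui1⟩ ⟨g, hgne⟩ :=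
        ⟨fun h => hguinv (congrArg Subtype.val h).symm, key _ _ (by rw [houi]) hudvd,
          Or.inl (H.inv_mem huH)⟩
      have Adj1' : (genNonCoprimeGraph G H).Adj ⟨g⁻¹, hgi1⟩ ⟨u, hu1⟩ :=
        ⟨fun h => hugi (congrArg Subtype.val h).symm, key _ _ (by rw [hogi]; exact hudvd)
          dvd_rfl, Or.inr huH⟩
      have Adj3' : (genNonCoprimeGraph G H).Adj ⟨u⁻¹, hui1⟩ ⟨g⁻¹, hgi1⟩ :=
        ⟨fun h => hgiu (congrArg Subtype.val h).symm,
          key _ _ (by rw [houi]) (by rw [hogi]; exact hudvd), Or.inl (H.inv_mem huH)⟩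
      set w₁ := Walk.cons Adj1 (Walk.cons Adj2 (Walk.cons Adj3 Walk.nil)) with hw₁
      set w₂ := Walk.cons Adj1' (Walk.cons Adj2 (Walk.cons Adj3' Walk.nil)) with hw₂
      have e₁ := huniq _ ⟨_, w₁, triangle_isCycle _ _ _, rfl⟩
      have e₂ := huniq _ ⟨_, w₂, triangle_isCycle _ _ _, rfl⟩
      have e12 : ({e | e ∈ w₁.edges} : Set _) = {e | e ∈ w₂.edges} := e₁.trans e₂.symm
      have hmem : s((⟨g, hgne⟩ : {x : G // x ≠ 1}), (⟨u, hu1⟩ : {x : G // x ≠ 1}))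
          ∈ ({e | e ∈ w₁.edges} : Set _) := by
        simp [hw₁]
      rw [e12] at hmem
      simp only [hw₂, Walk.edges_cons, Walk.edges_nil, Set.mem_setOf_eq, List.mem_cons,
        List.not_mem_nil, or_false, Sym2.eq, Sym2.rel_iff', Prod.mk.injEq,
        Prod.swap_prod_mk, Subtype.mk.injEq] at hmem
      rcases hmem with (⟨h1, h2⟩ | ⟨h1, h2⟩) | (⟨h1, h2⟩ | ⟨h1, h2⟩) | (⟨h1, h2⟩ | ⟨h1, h2⟩) <;>
        first
          | exact hggi h1
          | exact hggi h2
          | exact hggi h1.symm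
          | exact hggi h2.symm
          | exact hug h1
          | exact hug h2
          | exact hug h1.symm
          | exact hug h2.symm
          | exact hugi h1
          | exact hugi h2
          | exact hugi h1.symm
          | exact hugi h2.symm
          | exact hguinv h1
          | exact hguinv h2
          | exact hguinv h1.symm
          | exact hguinv h2.symm
          | exact huui h1
          | exact huui h2
          | exact huui h1.symm
          | exact huui h2.symm
          | exact hgiu h1
          | exact hgiu h2
          | exact hgiu h1.symm
          | exact hgiu h2.symm
    -- Step C : 4 ≤ n
    have hcardV : Fintype.card {x : G // x ≠ 1} = n - 1 := by
      rw [Fintype.card_subtype_compl, Fintype.card_subtype_eq]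
    have hge4 : 4 ≤ n := by
      have h3 := hw.three_le_length
      have hle := hw.support_nodup.length_le_card
      rw [List.length_tail, Walk.length_support, hcardV] at hle
      omega
    have hneq : n = 4 := le_antisymm hn4 hge4
    have hd4 : Nat.card H = 4 := by
      have h4 : Nat.card H ∣ 4 := hneq ▸ hdvd
      have hle4 : Nat.card H ≤ 4 := Nat.le_of_dvd (by norm_num) h4
      interval_cases h : Nat.card H
      · exact absurd h4 (by norm_num)
      · rfl
    refine ⟨H.eq_top_of_card_eq ?_, hneq⟩
    rw [hd4, Nat.card_eq_fintype_card, ← hndef, hneq]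
  · rintro ⟨rfl, h4⟩
    have hcardV : Fintype.card {x : G // x ≠ 1} = 3 := by
      rw [Fintype.card_subtype_compl, Fintype.card_subtype_eq, h4]
    have evord : ∀ a : {x : G // x ≠ 1}, 2 ∣ orderOf (a : G) := by
      intro a
      have h1 : orderOf (a : G) ∣ 2 ^ 2 := by
        rw [show (2 : ℕ) ^ 2 = 4 from by norm_num, ← h4]
        exact orderOf_dvd_card
      obtain ⟨i, hi, hor⟩ := (Nat.dvd_prime_pow Nat.prime_two).mp h1
      rcases Nat.eq_zero_or_pos i with rfl | hpos
      · rw [pow_zero, orderOf_eq_one_iff] at hor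
        exact absurd hor a.2
      · rw [hor]
        exact dvd_pow_self 2 (by omega)
    have key : ∀ a b : {x : G // x ≠ 1}, a ≠ b → (genNonCoprimeGraph G ⊤).Adj a b := by
      intro a b hab
      refine ⟨hab, ?_, Or.inl trivial⟩
      intro hh
      have hd := Nat.dvd_gcd (evord a) (evord b)
      rw [hh, Nat.dvd_one] at hd
      omega
    obtain ⟨a, b, hab⟩ := Fintype.exists_pair_of_one_lt_card
      (by omega : 1 < Fintype.card {x : G // x ≠ 1})
    obtain ⟨c, hca, hcb⟩ : ∃ c, c ≠ a ∧ c ≠ b := by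
      by_contra hc
      push_neg at hc
      have hsub : (Finset.univ : Finset {x : G // x ≠ 1}) ⊆ {a, b} := by
        intro c _
        rcases eq_or_ne c a with rfl | hne
        · simp
        · simp [hc c hne]
      have hlec := Finset.card_le_card hsub
      have h2 : ({a, b} : Finset {x : G // x ≠ 1}).card ≤ 2 := by
        refine le_trans (Finset.card_insert_le _ _) ?_
        simp
      rw [Finset.card_univ, hcardV] at hlec
      omega
    have hc₀ := triangle_isCycle (key a b hab) (key b c hcb.symm) (key c a hca)
    have master : ∀ (v : {x : G // x ≠ 1}) (w : (genNonCoprimeGraph G ⊤).Walk v v),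
        w.IsCycle → {e | e ∈ w.edges} = {e : Sym2 {x : G // x ≠ 1} | ¬ e.IsDiag} := by
      intro v w hw
      have h1 := hw.three_le_length
      have h2 := hw.support_nodup.length_le_card
      rw [List.length_tail, Walk.length_support, hcardV] at h2
      have hlen : w.length = 3 := by omega
      have hnodup : w.edges.Nodup := hw.isCircuit.isTrail.edges_nodup
      have hsub : w.edges.toFinset ⊆ Finset.univ.filter (fun e => ¬ e.IsDiag) := by
        intro e he
        rw [List.mem_toFinset] at he
        simp only [Finset.mem_filter, Finset.mem_univ, true_and]
        exact (genNonCoprimeGraph G ⊤).not_isDiag_of_mem_edgeSet (w.edges_subset_edgeSet he)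
      have hcard1 : w.edges.toFinset.card = 3 := by
        rw [List.toFinset_card_of_nodup hnodup, Walk.length_edges, hlen]
      have hcard2 :
          (Finset.univ.filter (fun e : Sym2 {x : G // x ≠ 1} => ¬ e.IsDiag)).card = 3 := by
        have hh := Sym2.card_subtype_not_diag (α := {x : G // x ≠ 1})
        rw [Fintype.card_subtype] at hh
        rw [hh, hcardV]
        decide
      have heq := Finset.eq_of_subset_of_card_le hsub (by omega)
      ext e
      simp only [Set.mem_setOf_eq, ← List.mem_toFinset, heq, Finset.mem_filter,
        Finset.mem_univ, true_and]
    refine ⟨_, ⟨a, _, hc₀, rfl⟩, ?_⟩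
    rintro s' ⟨v', w', hw', rfl⟩
    rw [master _ _ hw', master _ _ hc₀]
end

section
/- Let G be a cyclic group of order p₁p₂p₃p₄, a product of four distinct primes, and let H be the subgroup of order p₁p₂p₃. Then the generalized non-coprime graph Γ_{G,H} contains an induced 6-cycle, namely on elements of orders p₁, p₁p₂p₄, p₂, p₂p₃p₄, p₃, p₁p₃p₄. -/
lemma mem_of_orderOf_dvd_card' {G : Type*} [Group G] [Fintype G]
    (hG : IsCyclic G) (H : Subgroup G) {x : G} (h : orderOf x ∣ Nat.card H) :
    x ∈ H := by
  classical
  have := hG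
  set m := Nat.card H with hm
  have hm0 : 0 < m := Nat.card_pos
  have hS : (Finset.univ.filter (fun a : G => a ^ m = 1)).card ≤ m :=
    IsCyclic.card_pow_eq_one_le hm0
  have hsub : (H : Set G).toFinset ⊆ Finset.univ.filter (fun a : G => a ^ m = 1) := by
    intro y hy
    simp only [Set.mem_toFinset, SetLike.mem_coe] at hy
    simp only [Finset.mem_filter, Finset.mem_univ, true_and]
    have hdvd : orderOf y ∣ m := by
      have h2 := orderOf_dvd_natCard (⟨y, hy⟩ : H)
      rwa [Subgroup.orderOf_mk] at h2
    exact orderOf_dvd_iff_pow_eq_one.mp hdvd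
  have hcard : (H : Set G).toFinset.card = m := by
    rw [Set.toFinset_card, hm, Nat.card_eq_fintype_card]; rfl
  have heq : (H : Set G).toFinset = Finset.univ.filter (fun a : G => a ^ m = 1) :=
    Finset.eq_of_subset_of_card_le hsub (by rw [hcard]; exact hS)
  have hx : x ∈ Finset.univ.filter (fun a : G => a ^ m = 1) := by
    simp only [Finset.mem_filter, Finset.mem_univ, true_and]
    exact orderOf_dvd_iff_pow_eq_one.mp h
  rw [← heq, Set.mem_toFinset] at hx
  exact hx

lemma exists_orderOf_eq_of_dvd' {G : Type*} [Group G] [Fintype G]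
    (hG : IsCyclic G) {d : ℕ} (hd : d ∣ Fintype.card G) (hd0 : d ≠ 0) :
    ∃ x : G, orderOf x = d := by
  obtain ⟨g, hg⟩ := hG.exists_ofOrder_eq_natCard
  rw [Nat.card_eq_fintype_card] at hg
  refine ⟨g ^ (Fintype.card G / d), ?_⟩
  rw [orderOf_pow, hg]
  obtain ⟨k, hk⟩ := hd
  have hk0 : k ≠ 0 := by
    intro h0; rw [h0, mul_zero] at hk
    exact (Fintype.card_pos.ne' hk)
  rw [hk, Nat.mul_div_cancel_left _ (Nat.pos_of_ne_zero hd0),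
    Nat.gcd_eq_right ⟨d, mul_comm d k⟩,
    Nat.mul_div_assoc d dvd_rfl, Nat.div_self (Nat.pos_of_ne_zero hk0), mul_one]

lemma prime_ne_of_dvd0 {p q m : ℕ} (hp : p.Prime) (hq : q.Prime) (hpq : p ≠ q) (h : q ∣ m) :
    p ≠ m := by
  intro he
  subst he
  exact hpq ((Nat.prime_dvd_prime_iff_eq hq hp).mp h).symm

lemma gcd_ne_one_of_prime_dvd' {p x y : ℕ} (hp : p.Prime) (hx : p ∣ x) (hy : p ∣ y) :
    Nat.gcd x y ≠ 1 := by
  intro h1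
  have := Nat.dvd_gcd hx hy
  rw [h1, Nat.dvd_one] at this
  exact hp.one_lt.ne' this

set_option maxHeartbeats 1000000 in
theorem induced_six_cycle {G : Type*} [Group G] [Fintype G]
    (hG : IsCyclic G) (p₁ p₂ p₃ p₄ : ℕ)
    (hp₁ : p₁.Prime) (hp₂ : p₂.Prime) (hp₃ : p₃.Prime) (hp₄ : p₄.Prime)
    (h12 : p₁ ≠ p₂) (h13 : p₁ ≠ p₃) (h14 : p₁ ≠ p₄)
    (h23 : p₂ ≠ p₃) (h24 : p₂ ≠ p₄) (h34 : p₃ ≠ p₄)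
    (hcard : Fintype.card G = p₁ * p₂ * p₃ * p₄)
    (H : Subgroup G) (hH : Nat.card H = p₁ * p₂ * p₃) :
    ∃ a b c d e f : {g : G // g ≠ 1},
      orderOf (a : G) = p₁ ∧ orderOf (b : G) = p₁ * p₂ * p₄ ∧
      orderOf (c : G) = p₂ ∧ orderOf (d : G) = p₂ * p₃ * p₄ ∧
      orderOf (e : G) = p₃ ∧ orderOf (f : G) = p₁ * p₃ * p₄ ∧
      (genNonCoprimeGraph G H).Adj a b ∧ (genNonCoprimeGraph G H).Adj b c ∧
      (genNonCoprimeGraph G H).Adj c d ∧ (genNonCoprimeGraph G H).Adj d e ∧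
      (genNonCoprimeGraph G H).Adj e f ∧ (genNonCoprimeGraph G H).Adj f a ∧
      ¬ (genNonCoprimeGraph G H).Adj a c ∧ ¬ (genNonCoprimeGraph G H).Adj a d ∧
      ¬ (genNonCoprimeGraph G H).Adj a e ∧ ¬ (genNonCoprimeGraph G H).Adj b d ∧
      ¬ (genNonCoprimeGraph G H).Adj b e ∧ ¬ (genNonCoprimeGraph G H).Adj b f ∧
      ¬ (genNonCoprimeGraph G H).Adj c e ∧ ¬ (genNonCoprimeGraph G H).Adj c f ∧
      ¬ (genNonCoprimeGraph G H).Adj d f := by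
  have two₁ := hp₁.two_le
  have two₂ := hp₂.two_le
  have two₃ := hp₃.two_le
  have two₄ := hp₄.two_le
  -- elements of each order
  obtain ⟨a', ha'⟩ := exists_orderOf_eq_of_dvd' hG
    (show p₁ ∣ _ by rw [hcard]; exact ⟨p₂ * p₃ * p₄, by ring⟩) hp₁.pos.ne'
  obtain ⟨b', hb'⟩ := exists_orderOf_eq_of_dvd' hG
    (show p₁ * p₂ * p₄ ∣ _ by rw [hcard]; exact ⟨p₃, by ring⟩) (by positivity)
  obtain ⟨c', hc'⟩ := exists_orderOf_eq_of_dvd' hG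
    (show p₂ ∣ _ by rw [hcard]; exact ⟨p₁ * p₃ * p₄, by ring⟩) hp₂.pos.ne'
  obtain ⟨d', hd'⟩ := exists_orderOf_eq_of_dvd' hG
    (show p₂ * p₃ * p₄ ∣ _ by rw [hcard]; exact ⟨p₁, by ring⟩) (by positivity)
  obtain ⟨e', he'⟩ := exists_orderOf_eq_of_dvd' hG
    (show p₃ ∣ _ by rw [hcard]; exact ⟨p₁ * p₂ * p₄, by ring⟩) hp₃.pos.ne'
  obtain ⟨f', hf'⟩ := exists_orderOf_eq_of_dvd' hG
    (show p₁ * p₃ * p₄ ∣ _ by rw [hcard]; exact ⟨p₂, by ring⟩) (by positivity)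
  -- nonidentity
  have hane : a' ≠ 1 := by intro h; rw [h, orderOf_one] at ha'; omega
  have hbne : b' ≠ 1 := by intro h; rw [h, orderOf_one]  at hb'; have hh : p₁ * p₂ * p₄ = 1 := hb'.symm; have := Nat.eq_one_of_mul_eq_one_left hh; omega
  have hcne : c' ≠ 1 := by intro h; rw [h, orderOf_one] at hc'; omega
  have hdne : d' ≠ 1 := by intro h; rw [h, orderOf_one]  at hd'; have hh : p₂ * p₃ * p₄ = 1 := hd'.symm; have := Nat.eq_one_of_mul_eq_one_left hh; omega
  have hene : e' ≠ 1 := by intro h; rw [h, orderOf_one] at he'; omega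
  have hfne : f' ≠ 1 := by intro h; rw [h, orderOf_one]  at hf'; have hh : p₁ * p₃ * p₄ = 1 := hf'.symm; have := Nat.eq_one_of_mul_eq_one_left hh; omega
  -- memberships
  have haH : a' ∈ H := mem_of_orderOf_dvd_card' hG H
    (by rw [ha', hH]; exact ⟨p₂ * p₃, by ring⟩)
  have hcH : c' ∈ H := mem_of_orderOf_dvd_card' hG H
    (by rw [hc', hH]; exact ⟨p₁ * p₃, by ring⟩)
  have heH : e' ∈ H := mem_of_orderOf_dvd_card' hG H
    (by rw [he', hH]; exact ⟨p₁ * p₂, by ring⟩)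
  -- non-memberships
  have notmem : ∀ x : G, orderOf x = p₁ * p₂ * p₄ ∨ orderOf x = p₂ * p₃ * p₄ ∨
      orderOf x = p₁ * p₃ * p₄ → x ∉ H := by
    intro x hx hxH
    have hdv := orderOf_dvd_natCard (⟨x, hxH⟩ : H)
    rw [Subgroup.orderOf_mk, hH] at hdv
    have h4 : p₄ ∣ p₁ * p₂ * p₃ := by
      refine dvd_trans ?_ hdv
      rcases hx with h | h | h <;> rw [h] <;> exact Dvd.intro_left _ rfl
    rcases hp₄.dvd_mul.mp h4 with h | h
    · rcases hp₄.dvd_mul.mp h with h' | h'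
      · exact h14 ((Nat.prime_dvd_prime_iff_eq hp₄ hp₁).mp h').symm
      · exact h24 ((Nat.prime_dvd_prime_iff_eq hp₄ hp₂).mp h').symm
    · exact h34 ((Nat.prime_dvd_prime_iff_eq hp₄ hp₃).mp h).symm
  have hbH : b' ∉ H := notmem b' (Or.inl hb')
  have hdH : d' ∉ H := notmem d' (Or.inr (Or.inl hd'))
  have hfH : f' ∉ H := notmem f' (Or.inr (Or.inr hf'))
  -- coprimality facts
  have c12 : Nat.Coprime p₁ p₂ := (Nat.coprime_primes hp₁ hp₂).mpr h12
  have c13 : Nat.Coprime p₁ p₃ := (Nat.coprime_primes hp₁ hp₃).mpr h13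
  have c14 : Nat.Coprime p₁ p₄ := (Nat.coprime_primes hp₁ hp₄).mpr h14
  have c23 : Nat.Coprime p₂ p₃ := (Nat.coprime_primes hp₂ hp₃).mpr h23
  have c24 : Nat.Coprime p₂ p₄ := (Nat.coprime_primes hp₂ hp₄).mpr h24
  have c34 : Nat.Coprime p₃ p₄ := (Nat.coprime_primes hp₃ hp₄).mpr h34
  refine ⟨⟨a', hane⟩, ⟨b', hbne⟩, ⟨c', hcne⟩, ⟨d', hdne⟩, ⟨e', hene⟩, ⟨f', hfne⟩,
    ha', hb', hc', hd', he', hf', ?_, ?_, ?_, ?_, ?_, ?_, ?_, ?_, ?_, ?_, ?_, ?_, ?_, ?_, ?_⟩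
  -- Adj a b
  · refine ⟨?_, ?_, Or.inl haH⟩
    · intro h
      have : orderOf a' = orderOf b' := by rw [Subtype.mk_eq_mk.mp h]
      rw [ha', hb'] at this
      exact prime_ne_of_dvd0 hp₁ hp₂ h12 ⟨p₁ * p₄, by ring⟩ this
    · rw [ha', hb']
      exact gcd_ne_one_of_prime_dvd' hp₁ dvd_rfl ⟨p₂ * p₄, by ring⟩
  -- Adj b c
  · refine ⟨?_, ?_, Or.inr hcH⟩
    · intro h
      have : orderOf b' = orderOf c' := by rw [Subtype.mk_eq_mk.mp h]
      rw [hb', hc'] at this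
      exact prime_ne_of_dvd0 hp₂ hp₁ h12.symm ⟨p₂ * p₄, by ring⟩ this.symm
    · rw [hb', hc']
      exact gcd_ne_one_of_prime_dvd' hp₂ ⟨p₁ * p₄, by ring⟩ dvd_rfl
  -- Adj c d
  · refine ⟨?_, ?_, Or.inl hcH⟩
    · intro h
      have : orderOf c' = orderOf d' := by rw [Subtype.mk_eq_mk.mp h]
      rw [hc', hd'] at this
      exact prime_ne_of_dvd0 hp₂ hp₃ h23 ⟨p₂ * p₄, by ring⟩ this
    · rw [hc', hd']
      exact gcd_ne_one_of_prime_dvd' hp₂ dvd_rfl ⟨p₃ * p₄, by ring⟩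
  -- Adj d e
  · refine ⟨?_, ?_, Or.inr heH⟩
    · intro h
      have : orderOf d' = orderOf e' := by rw [Subtype.mk_eq_mk.mp h]
      rw [hd', he'] at this
      exact prime_ne_of_dvd0 hp₃ hp₂ h23.symm ⟨p₃ * p₄, by ring⟩ this.symm
    · rw [hd', he']
      exact gcd_ne_one_of_prime_dvd' hp₃ ⟨p₂ * p₄, by ring⟩ dvd_rfl
  -- Adj e f
  · refine ⟨?_, ?_, Or.inl heH⟩
    · intro h
      have : orderOf e' = orderOf f' := by rw [Subtype.mk_eq_mk.mp h]
      rw [he', hf'] at this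
      exact prime_ne_of_dvd0 hp₃ hp₁ h13.symm ⟨p₃ * p₄, by ring⟩ this
    · rw [he', hf']
      exact gcd_ne_one_of_prime_dvd' hp₃ dvd_rfl ⟨p₁ * p₄, by ring⟩
  -- Adj f a
  · refine ⟨?_, ?_, Or.inr haH⟩
    · intro h
      have : orderOf f' = orderOf a' := by rw [Subtype.mk_eq_mk.mp h]
      rw [hf', ha'] at this
      exact prime_ne_of_dvd0 hp₁ hp₃ h13 ⟨p₁ * p₄, by ring⟩ this.symm
    · rw [hf', ha']
      exact gcd_ne_one_of_prime_dvd' hp₁ ⟨p₃ * p₄, by ring⟩ dvd_rfl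
  -- ¬ Adj a c
  · rintro ⟨-, hg, -⟩
    exact hg (by rw [ha', hc']; exact c12)
  -- ¬ Adj a d
  · rintro ⟨-, hg, -⟩
    refine hg ?_
    rw [ha', hd']
    exact (c12.mul_right c13).mul_right c14
  -- ¬ Adj a e
  · rintro ⟨-, hg, -⟩
    exact hg (by rw [ha', he']; exact c13)
  -- ¬ Adj b d
  · rintro ⟨-, -, hm⟩
    rcases hm with h | h
    · exact hbH h
    · exact hdH h
  -- ¬ Adj b e
  · rintro ⟨-, hg, -⟩
    refine hg ?_
    rw [hb', he']
    exact ((c13.symm.mul_right c23.symm).mul_right c34).symm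
  -- ¬ Adj b f
  · rintro ⟨-, -, hm⟩
    rcases hm with h | h
    · exact hbH h
    · exact hfH h
  -- ¬ Adj c e
  · rintro ⟨-, hg, -⟩
    exact hg (by rw [hc', he']; exact c23)
  -- ¬ Adj c f
  · rintro ⟨-, hg, -⟩
    refine hg ?_
    rw [hc', hf']
    exact (c12.symm.mul_right c23).mul_right c24
  -- ¬ Adj d f
  · rintro ⟨-, -, hm⟩
    rcases hm with h | h
    · exact hdH h
    · exact hfH h
end

section
/- Let G be a nilpotent group of order n and H a subgroup of order m. Then the generalized non-coprime graph Γ_{G,H} is isomorphic to the generalized non-coprime graph Γ_{Z_n, Z_m}, where Z_m is the (unique up to conjugacy, existing since m | n) subgroup of order m of the cyclic group Z_n. -/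
open Finset


lemma fact_prod_pow (s : Finset ℕ) (hs : ∀ p ∈ s, p.Prime) (f : ℕ → ℕ) (q : ℕ) :
    (∏ p ∈ s, p ^ f p).factorization q = if q ∈ s then f q else 0 := by
  classical
  rw [Nat.factorization_prod (fun p hp => pow_ne_zero _ (hs p hp).pos.ne')]
  rw [Finset.sum_apply']
  rw [Finset.sum_congr rfl (fun p hp => by
    rw [(hs p hp).factorization_pow, Finsupp.single_apply])]
  exact Finset.sum_ite_eq' s q f

lemma card_pow_one_congr {A B : Type*} [Group A] [Group B] (e : A ≃* B) (d : ℕ) :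
    Nat.card {x : B // x ^ d = 1} = Nat.card {a : A // a ^ d = 1} :=
  Nat.card_congr (Equiv.subtypeEquiv e.toEquiv (fun a => by
    rw [show e.toEquiv a = e a from rfl, ← map_pow,
      MulEquiv.map_eq_one_iff])).symm

lemma card_pow_one_pi {ι : Type*} [Fintype ι] (A : ι → Type*) [∀ i, Group (A i)] (d : ℕ) :
    Nat.card {f : ∀ i, A i // f ^ d = 1} = ∏ i, Nat.card {x : A i // x ^ d = 1} := by
  rw [Nat.card_congr ((Equiv.subtypeEquivRight (fun f => by
      simp [funext_iff])).trans (Equiv.subtypePiEquivPi (p := fun i y => y ^ d = 1))),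
    Nat.card_pi]

lemma hall_count {G : Type*} [Group G] [Fintype G] [Group.IsNilpotent G]
    (d : ℕ) (hd : d ∣ Nat.card G)
    (hfull : ∀ p : ℕ, p.Prime → p ∣ d → d.factorization p = (Nat.card G).factorization p) :
    Nat.card {x : G // x ^ d = 1} = d := by
  classical
  have hn0 : Nat.card G ≠ 0 := Nat.card_pos.ne'
  have hd0 : d ≠ 0 := fun h => hn0 (Nat.eq_zero_of_zero_dvd (h ▸ hd))
  obtain ⟨e⟩ := ((isNilpotent_of_finite_tfae (G := G)).out 0 4).mp ‹Group.IsNilpotent G›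
  have hnorm := ((isNilpotent_of_finite_tfae (G := G)).out 0 3).mp ‹Group.IsNilpotent G›
  rw [card_pow_one_congr e, card_pow_one_pi]
  have key : ∀ p : (Nat.card G).primeFactors,
      Nat.card {g : ∀ P : Sylow p.1 G, (P : Subgroup G) // g ^ d = 1} =
      if p.1 ∣ d then p.1 ^ (Nat.card G).factorization p.1 else 1 := by
    intro ⟨p, hp⟩
    haveI : Fact p.Prime := ⟨Nat.prime_of_mem_primeFactors hp⟩
    haveI hu : Unique (Sylow p G) :=
      Sylow.unique_of_normal (default : Sylow p G) (hnorm p ‹_› _)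
    rw [card_pow_one_pi]
    rw [Fintype.prod_eq_single (default : Sylow p G)
      (fun P hP => absurd (Subsingleton.elim P default) hP)]
    set P : Sylow p G := default
    by_cases hpd : p ∣ d
    · rw [if_pos hpd]
      have hall : ∀ y : (P : Subgroup G), y ^ d = 1 := by
        intro y
        apply orderOf_dvd_iff_pow_eq_one.mp
        have h1 : orderOf y ∣ p ^ (Nat.card G).factorization p := by
          rw [← Sylow.card_eq_multiplicity P]
          exact orderOf_dvd_natCard y
        refine h1.trans ?_
        calc p ^ (Nat.card G).factorization p = p ^ d.factorization p := by
              rw [hfull p ‹Fact p.Prime›.out hpd]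
          _ ∣ d := Nat.ordProj_dvd d p
      rw [Nat.card_congr (Equiv.subtypeUnivEquiv hall), Sylow.card_eq_multiplicity]
    · rw [if_neg hpd]
      have h1 : ∀ y : (P : Subgroup G), y ^ d = 1 ↔ y = 1 := by
        intro y
        constructor
        · intro h
          obtain ⟨k, hk⟩ := P.isPGroup' y
          have h2 : orderOf y ∣ p ^ k := orderOf_dvd_of_pow_eq_one hk
          obtain ⟨j, hj, hoy⟩ := (Nat.dvd_prime_pow ‹Fact p.Prime›.out).mp h2
          have h3 : orderOf y ∣ d := orderOf_dvd_of_pow_eq_one h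
          rcases Nat.eq_zero_or_pos j with rfl | hj0
          · simpa [pow_zero, orderOf_eq_one_iff] using hoy
          · exfalso
            exact hpd (dvd_trans (dvd_pow_self p hj0.ne') (hoy ▸ h3))
        · rintro rfl; exact one_pow d
      rw [Nat.card_congr (Equiv.subtypeEquivRight h1)]
      simp [Nat.card_eq_fintype_card, Fintype.card_subtype_eq]
  rw [Finset.prod_congr rfl (fun p _ => key p)]
  rw [Finset.prod_coe_sort (f := fun p => if p ∣ d then p ^ (Nat.card G).factorization p else 1)]
  rw [← Finset.prod_filter]
  have hset : (Nat.card G).primeFactors.filter (· ∣ d) = d.primeFactors := by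
    ext q
    simp only [Finset.mem_filter, Nat.mem_primeFactors]
    constructor
    · rintro ⟨⟨hq, _, _⟩, hqd⟩; exact ⟨hq, hqd, hd0⟩
    · rintro ⟨hq, hqd, _⟩; exact ⟨⟨hq, hqd.trans hd, hn0⟩, hqd⟩
  rw [hset]
  rw [Finset.prod_congr rfl (fun q hq => by
    rw [← hfull q (Nat.prime_of_mem_primeFactors hq) (Nat.dvd_of_mem_primeFactors hq)])]
  conv_rhs => rw [← Nat.factorization_prod_pow_eq_self hd0]
  rw [Nat.prod_factorization_eq_prod_primeFactors]

noncomputable def eqCount (G : Type*) [Group G] (S : Finset ℕ) : ℕ :=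
  Nat.card {x : G // (orderOf x).primeFactors = S}

noncomputable def memB {G : Type*} [Group G] (H : Subgroup G) (x : G) : Bool :=
  @decide (x ∈ H) (Classical.propDecidable _)

lemma sub_count {G : Type*} [Group G] [Fintype G] [Group.IsNilpotent G] (S : Finset ℕ) :
    Nat.card {x : G // (orderOf x).primeFactors ⊆ S} =
      ∏ p ∈ (Nat.card G).primeFactors ∩ S, p ^ (Nat.card G).factorization p := by
  classical
  set n := Nat.card G with hn
  have hn0 : n ≠ 0 := Nat.card_pos.ne'
  set d := ∏ p ∈ n.primeFactors ∩ S, p ^ n.factorization p with hdd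
  have hprime : ∀ p ∈ n.primeFactors ∩ S, p.Prime := fun p hp =>
    Nat.prime_of_mem_primeFactors (Finset.mem_of_mem_inter_left hp)
  have hdf : ∀ q, d.factorization q = if q ∈ n.primeFactors ∩ S then n.factorization q else 0 :=
    fun q => fact_prod_pow _ hprime _ q
  have hd0 : d ≠ 0 := Finset.prod_ne_zero_iff.mpr
    (fun p hp => pow_ne_zero _ (hprime p hp).pos.ne')
  have hdvd : d ∣ n := by
    rw [← Nat.factorization_le_iff_dvd hd0 hn0]
    intro q
    rw [hdf q]
    split <;> simp
  have hfull : ∀ p : ℕ, p.Prime → p ∣ d → d.factorization p = n.factorization p := by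
    intro p hp hpd
    have : p ∈ d.primeFactors := Nat.mem_primeFactors.mpr ⟨hp, hpd, hd0⟩
    have h2 : d.factorization p ≠ 0 := by
      rwa [← Finsupp.mem_support_iff, Nat.support_factorization]
    by_cases hmem : p ∈ n.primeFactors ∩ S
    · rw [hdf p, if_pos hmem]
    · rw [hdf p, if_neg hmem] at h2; simp at h2
  have hiff : ∀ x : G, (orderOf x).primeFactors ⊆ S ↔ x ^ d = 1 := by
    intro x
    have ho0 : orderOf x ≠ 0 := (orderOf_pos x).ne'
    have hoN : orderOf x ∣ n := orderOf_dvd_natCard x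
    constructor
    · intro hsub
      apply orderOf_dvd_iff_pow_eq_one.mp
      rw [← Nat.factorization_le_iff_dvd ho0 hd0]
      intro q
      rcases Nat.eq_zero_or_pos ((orderOf x).factorization q) with h | h
      · simp [h]
      · have hq : q ∈ (orderOf x).primeFactors := by
          rw [← Nat.support_factorization, Finsupp.mem_support_iff]
          exact h.ne'
        have hqS : q ∈ S := hsub hq
        have hqn : q ∈ n.primeFactors := by
          refine Nat.mem_primeFactors.mpr ⟨Nat.prime_of_mem_primeFactors hq,
            (Nat.dvd_of_mem_primeFactors hq).trans hoN, hn0⟩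
        rw [hdf q, if_pos (Finset.mem_inter.mpr ⟨hqn, hqS⟩)]
        exact (Nat.factorization_le_iff_dvd ho0 hn0).mpr hoN q
    · intro hpow q hq
      have h1 : orderOf x ∣ d := orderOf_dvd_of_pow_eq_one hpow
      have h2 : q ∈ d.primeFactors :=
        Nat.mem_primeFactors.mpr ⟨Nat.prime_of_mem_primeFactors hq,
          (Nat.dvd_of_mem_primeFactors hq).trans h1, hd0⟩
      have h3 : d.factorization q ≠ 0 := by
        rwa [← Finsupp.mem_support_iff, Nat.support_factorization]
      rw [hdf q] at h3
      split at h3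
      · exact (Finset.mem_inter.mp ‹_›).2
      · simp at h3
  rw [Nat.card_congr (Equiv.subtypeEquivRight hiff)]
  exact hall_count d hdvd hfull

lemma sub_eq_sum {G : Type*} [Group G] [Fintype G] (S : Finset ℕ) :
    Nat.card {x : G // (orderOf x).primeFactors ⊆ S} =
      ∑ T ∈ S.powerset, eqCount G T := by
  classical
  simp only [eqCount, Nat.card_eq_fintype_card, Fintype.card_subtype]
  rw [Finset.card_eq_sum_card_fiberwise
    (f := fun x : G => (orderOf x).primeFactors) (t := S.powerset)
    (fun x hx => Finset.mem_powerset.mpr (by simpa using hx))]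
  refine Finset.sum_congr rfl (fun T hT => ?_)
  congr 1
  ext x
  simp only [Finset.mem_filter, Finset.mem_univ, true_and]
  exact ⟨fun h => h.2, fun h => ⟨h ▸ Finset.mem_powerset.mp hT, h⟩⟩

lemma eqCount_eq {G₁ G₂ : Type*} [Group G₁] [Fintype G₁] [Group.IsNilpotent G₁]
    [Group G₂] [Fintype G₂] [Group.IsNilpotent G₂]
    (h : Nat.card G₁ = Nat.card G₂) (S : Finset ℕ) :
    eqCount G₁ S = eqCount G₂ S := by
  classical
  induction S using Finset.strongInduction with
  | _ S ih =>
    have h1 := sub_eq_sum (G := G₁) S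
    have h2 := sub_eq_sum (G := G₂) S
    rw [sub_count] at h1 h2
    rw [← Finset.sum_erase_add _ _ (Finset.mem_powerset_self S)] at h1 h2
    have hsum : ∑ T ∈ S.powerset.erase S, eqCount G₁ T
        = ∑ T ∈ S.powerset.erase S, eqCount G₂ T := by
      refine Finset.sum_congr rfl (fun T hT => ?_)
      obtain ⟨hne, hsub⟩ := Finset.mem_erase.mp hT
      exact ih T (lt_of_le_of_ne (Finset.mem_powerset.mp hsub) hne)
    rw [h] at h1
    omega


lemma memB_true {G : Type*} [Group G] (H : Subgroup G) (x : G) :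
    memB H x = true ↔ x ∈ H := @decide_eq_true_iff _ (Classical.propDecidable _)

lemma memB_false {G : Type*} [Group G] (H : Subgroup G) (x : G) :
    memB H x = false ↔ x ∉ H := by
  rw [← Bool.not_eq_true, not_iff_not.mpr (memB_true H x)]

lemma count_mem {G : Type*} [Group G] (H : Subgroup G) (S : Finset ℕ) :
    Nat.card {x : G // (orderOf x).primeFactors = S ∧ x ∈ H} = eqCount H S :=
  Nat.card_congr
  { toFun := fun a => ⟨⟨a.1, a.2.2⟩, by rw [Subgroup.orderOf_mk]; exact a.2.1⟩
    invFun := fun b => ⟨b.1.1, by rw [Subgroup.orderOf_coe]; exact b.2, b.1.2⟩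
    left_inv := fun a => rfl
    right_inv := fun b => rfl }

lemma count_split {G : Type*} [Group G] [Fintype G] (H : Subgroup G) (S : Finset ℕ) :
    eqCount G S = Nat.card {x : G // (orderOf x).primeFactors = S ∧ x ∈ H} +
      Nat.card {x : G // (orderOf x).primeFactors = S ∧ x ∉ H} := by
  classical
  simp only [eqCount, Nat.card_eq_fintype_card, Fintype.card_subtype]
  rw [← Finset.card_filter_add_card_filter_not
    (s := Finset.univ.filter (fun x : G => (orderOf x).primeFactors = S))
    (p := fun x => x ∈ H)]
  rw [Finset.filter_filter, Finset.filter_filter]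

lemma fiber_card {G : Type*} [Group G] [Fintype G] (H : Subgroup G) (c : Finset ℕ × Bool) :
    Nat.card {a : {x : G // x ≠ 1} //
        ((orderOf (a.1 : G)).primeFactors, memB H a.1) = c} =
      if c.1 = ∅ then 0
      else if c.2 then eqCount H c.1 else eqCount G c.1 - eqCount H c.1 := by
  classical
  obtain ⟨S, b⟩ := c
  by_cases hS : S = ∅
  · subst hS
    rw [if_pos rfl]
    have : IsEmpty {a : {x : G // x ≠ 1} //
        ((orderOf (a.1 : G)).primeFactors, memB H a.1) = (∅, b)} := by
      refine ⟨fun a => a.1.2 ?_⟩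
      have h1 : (orderOf (a.1.1 : G)).primeFactors = ∅ :=
        congrArg Prod.fst a.2
      rcases Nat.primeFactors_eq_empty.mp h1 with h | h
      · exact absurd h (orderOf_pos (a.1.1 : G)).ne'
      · exact orderOf_eq_one_iff.mp h
    rw [Nat.card_of_isEmpty]
  · rw [if_neg hS]
    have himp : ∀ x : G, (orderOf x).primeFactors = S → x ≠ 1 := by
      intro x h hx
      exact hS (by rw [← h, hx, orderOf_one]; simp)
    cases b
    · have eqv : {a : {x : G // x ≠ 1} // ((orderOf (a.1 : G)).primeFactors, memB H a.1) = (S, false)}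
          ≃ {x : G // (orderOf x).primeFactors = S ∧ x ∉ H} :=
        { toFun := fun a => ⟨a.1.1, (Prod.mk.injEq _ _ _ _ ▸ a.2).1,
            (memB_false H a.1.1).mp (Prod.mk.injEq _ _ _ _ ▸ a.2).2⟩
          invFun := fun x => ⟨⟨x.1, himp x.1 x.2.1⟩, by
            rw [Prod.mk.injEq]
            exact ⟨x.2.1, (memB_false H x.1).mpr x.2.2⟩⟩
          left_inv := fun a => rfl
          right_inv := fun x => rfl }
      rw [Nat.card_congr eqv]
      have h1 := count_split H S
      have h2 := count_mem H S
      simp only [Bool.false_eq_true, if_false]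
      omega
    · have eqv : {a : {x : G // x ≠ 1} // ((orderOf (a.1 : G)).primeFactors, memB H a.1) = (S, true)}
          ≃ {x : G // (orderOf x).primeFactors = S ∧ x ∈ H} :=
        { toFun := fun a => ⟨a.1.1, (Prod.mk.injEq _ _ _ _ ▸ a.2).1,
            (memB_true H a.1.1).mp (Prod.mk.injEq _ _ _ _ ▸ a.2).2⟩
          invFun := fun x => ⟨⟨x.1, himp x.1 x.2.1⟩, by
            rw [Prod.mk.injEq]
            exact ⟨x.2.1, (memB_true H x.1).mpr x.2.2⟩⟩
          left_inv := fun a => rfl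
          right_inv := fun x => rfl }
      rw [Nat.card_congr eqv, count_mem H S]
      simp

theorem nilpotent_iso_cyclic {G : Type*} [Group G] [Fintype G]
    [Group.IsNilpotent G] (n m : ℕ) [NeZero n]
    (hn : Fintype.card G = n)
    (H : Subgroup G) (hm : Nat.card H = m)
    (K : Subgroup (Multiplicative (ZMod n))) (hK : Nat.card K = m) :
    Nonempty (genNonCoprimeGraph (Multiplicative (ZMod n)) K ≃g
      genNonCoprimeGraph G H) := by
  classical
  have hcardG : Nat.card G = n := by rw [Nat.card_eq_fintype_card, hn]
  have hcardM : Nat.card (Multiplicative (ZMod n)) = n := by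
    rw [Nat.card_eq_fintype_card]
    simp [ZMod.card]
  have hfib : ∀ c : Finset ℕ × Bool,
      Nat.card {a : {x : Multiplicative (ZMod n) // x ≠ 1} //
        ((orderOf (a.1 : Multiplicative (ZMod n))).primeFactors, memB K a.1) = c}
      = Nat.card {b : {x : G // x ≠ 1} //
        ((orderOf (b.1 : G)).primeFactors, memB H b.1) = c} := by
    intro c
    rw [fiber_card, fiber_card]
    have h1 : eqCount (Multiplicative (ZMod n)) c.1 = eqCount G c.1 :=
      eqCount_eq (by rw [hcardM, hcardG]) c.1
    have h2 : eqCount K c.1 = eqCount H c.1 :=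
      eqCount_eq (by rw [hK, hm]) c.1
    rw [h1, h2]
  have hfe : ∀ c : Finset ℕ × Bool,
      {a : {x : Multiplicative (ZMod n) // x ≠ 1} //
        (fun a : {x : Multiplicative (ZMod n) // x ≠ 1} =>
          ((orderOf (a.1 : Multiplicative (ZMod n))).primeFactors, memB K a.1)) a = c} ≃
      {b : {x : G // x ≠ 1} //
        (fun b : {x : G // x ≠ 1} =>
          ((orderOf (b.1 : G)).primeFactors, memB H b.1)) b = c} :=
    fun c => Classical.choice (Finite.card_eq.mp (hfib c))
  let e : {x : Multiplicative (ZMod n) // x ≠ 1} ≃ {x : G // x ≠ 1} :=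
    Equiv.ofFiberEquiv hfe
  have he : ∀ a, ((orderOf ((e a).1 : G)).primeFactors, memB H (e a).1) =
      ((orderOf (a.1 : Multiplicative (ZMod n))).primeFactors, memB K a.1) :=
    fun a => Equiv.ofFiberEquiv_map hfe a
  refine ⟨⟨e, ?_⟩⟩
  intro a b
  have hsa : (orderOf ((e a).1 : G)).primeFactors
      = (orderOf (a.1 : Multiplicative (ZMod n))).primeFactors := congrArg Prod.fst (he a)
  have hsb : (orderOf ((e b).1 : G)).primeFactors
      = (orderOf (b.1 : Multiplicative (ZMod n))).primeFactors := congrArg Prod.fst (he b)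
  have hma : memB H (e a).1 = memB K a.1 := congrArg Prod.snd (he a)
  have hmb : memB H (e b).1 = memB K b.1 := congrArg Prod.snd (he b)
  have hne : (e a ≠ e b) ↔ (a ≠ b) := (Equiv.apply_eq_iff_eq e).not
  have hgcd : Nat.gcd (orderOf ((e a).1 : G)) (orderOf ((e b).1 : G)) = 1 ↔
      Nat.gcd (orderOf (a.1 : Multiplicative (ZMod n)))
        (orderOf (b.1 : Multiplicative (ZMod n))) = 1 := by
    rw [← Nat.coprime_iff_gcd_eq_one, ← Nat.coprime_iff_gcd_eq_one,
      ← Nat.disjoint_primeFactors (orderOf_pos _).ne' (orderOf_pos _).ne',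
      ← Nat.disjoint_primeFactors (orderOf_pos _).ne' (orderOf_pos _).ne', hsa, hsb]
  have hmemA : (((e a).1 : G) ∈ H) ↔ ((a.1 : Multiplicative (ZMod n)) ∈ K) := by
    rw [← memB_true, ← memB_true, hma]
  have hmemB : (((e b).1 : G) ∈ H) ↔ ((b.1 : Multiplicative (ZMod n)) ∈ K) := by
    rw [← memB_true, ← memB_true, hmb]
  show (e a ≠ e b ∧ Nat.gcd (orderOf ((e a).1 : G)) (orderOf ((e b).1 : G)) ≠ 1 ∧
      (((e a).1 : G) ∈ H ∨ ((e b).1 : G) ∈ H)) ↔ _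
  exact and_congr hne (and_congr hgcd.not (or_congr hmemA hmemB))
end

section
/- For a finite group G, the non-coprime graph Γ_G is connected if and only if the Gruenberg–Kegel graph of G is connected. -/
/-- The non-coprime graph of a group: vertices are non-identity elements,
adjacent iff their orders are not coprime. -/
def nonCoprimeGraph (G : Type*) [Group G] : SimpleGraph {x : G // x ≠ 1} where
  Adj a b := a ≠ b ∧ Nat.gcd (orderOf (a : G)) (orderOf (b : G)) ≠ 1
  symm := by
    constructor
    intro a b h
    exact ⟨h.1.symm, by rw [Nat.gcd_comm]; exact h.2⟩
  loopless := by
    constructor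
    intro a h
    exact h.1 rfl

/-- The Gruenberg--Kegel (prime) graph of a finite group: vertices are the prime
divisors of |G|, with p and q adjacent iff G has an element of order pq. -/
def gkGraph (G : Type*) [Group G] [Fintype G] :
    SimpleGraph {p : ℕ // p.Prime ∧ p ∣ Fintype.card G} where
  Adj p q := (p : ℕ) ≠ (q : ℕ) ∧ ∃ g : G, orderOf g = (p : ℕ) * (q : ℕ)
  symm := by
    constructor
    intro p q h
    obtain ⟨h1, g, hg⟩ := h
    exact ⟨h1.symm, g, by rw [hg, mul_comm]⟩
  loopless := by
    constructor
    intro p h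
    exact h.1 rfl

private lemma ncReach {G : Type*} [Group G] {a b : {x : G // x ≠ 1}}
    (h : Nat.gcd (orderOf (a : G)) (orderOf (b : G)) ≠ 1) :
    (nonCoprimeGraph G).Reachable a b := by
  by_cases hab : a = b
  · subst hab; exact SimpleGraph.Reachable.refl _
  · exact SimpleGraph.Adj.reachable ⟨hab, h⟩

private lemma gkReach {G : Type*} [Group G] [Fintype G] (a : G) {p q : ℕ}
    (hp : p.Prime) (hq : q.Prime) (hpa : p ∣ orderOf a) (hqa : q ∣ orderOf a)
    (hpd : p ∣ Fintype.card G) (hqd : q ∣ Fintype.card G) :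
    (gkGraph G).Reachable ⟨p, hp, hpd⟩ ⟨q, hq, hqd⟩ := by
  by_cases hpq : p = q
  · subst hpq; exact SimpleGraph.Reachable.refl _
  · have hco : Nat.Coprime p q := (Nat.coprime_primes hp hq).mpr hpq
    have hdvd : p * q ∣ orderOf a := hco.mul_dvd_of_dvd_of_dvd hpa hqa
    have hN : orderOf a ≠ 0 := (orderOf_pos a).ne'
    refine SimpleGraph.Adj.reachable ⟨hpq, a ^ (orderOf a / (p * q)), ?_⟩
    rw [orderOf_pow]
    have hg : Nat.gcd (orderOf a) (orderOf a / (p * q)) = orderOf a / (p * q) :=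
      Nat.gcd_eq_right (Nat.div_dvd_of_dvd hdvd)
    rw [hg, Nat.div_div_self hdvd hN]

private lemma fwdWalk {G : Type*} [Group G] [Fintype G] {a b : {x : G // x ≠ 1}}
    (w : (nonCoprimeGraph G).Walk a b) :
    ∀ p q (hp : p.Prime) (hq : q.Prime) (hpa : p ∣ orderOf (a : G))
      (hqb : q ∣ orderOf (b : G)),
      (gkGraph G).Reachable ⟨p, hp, hpa.trans (orderOf_dvd_card)⟩
        ⟨q, hq, hqb.trans (orderOf_dvd_card)⟩ := by
  induction w with
  | nil =>
    intro p q hp hq hpa hqb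
    exact gkReach _ hp hq hpa hqb (hpa.trans orderOf_dvd_card) (hqb.trans orderOf_dvd_card)
  | @cons a c b h w ih =>
    intro p q hp hq hpa hqb
    obtain ⟨r, hr, hrg⟩ := Nat.exists_prime_and_dvd h.2
    have hra : r ∣ orderOf (a : G) := hrg.trans (Nat.gcd_dvd_left _ _)
    have hrc : r ∣ orderOf (c : G) := hrg.trans (Nat.gcd_dvd_right _ _)
    exact (gkReach (a : G) hp hr hpa hra (hpa.trans orderOf_dvd_card)
      (hrc.trans orderOf_dvd_card)).trans
      (ih r q hr hq hrc hqb)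

private lemma bwdWalk {G : Type*} [Group G] [Fintype G]
    {p q : {p : ℕ // p.Prime ∧ p ∣ Fintype.card G}} (w : (gkGraph G).Walk p q) :
    ∀ (x y : {x : G // x ≠ 1}), (p : ℕ) ∣ orderOf (x : G) → (q : ℕ) ∣ orderOf (y : G) →
      (nonCoprimeGraph G).Reachable x y := by
  induction w with
  | @nil u =>
    intro x y hx hy
    exact ncReach fun h => u.2.1.one_lt.ne'
      (Nat.eq_one_of_dvd_one (h ▸ Nat.dvd_gcd hx hy))
  | @cons p r q h w ih =>
    intro x y hx hy
    obtain ⟨hne, g, hg⟩ := h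
    have hg1 : g ≠ 1 := by
      intro h1
      rw [h1, orderOf_one] at hg
      have h2 := p.2.1.two_le
      have h3 := r.2.1.two_le
      nlinarith
    have hpg : (p : ℕ) ∣ orderOf g := by rw [hg]; exact dvd_mul_right _ _
    have hrg : (r : ℕ) ∣ orderOf g := by rw [hg]; exact dvd_mul_left _ _
    refine (ncReach (a := x) (b := ⟨g, hg1⟩) ?_).trans (ih ⟨g, hg1⟩ y hrg hy)
    intro hgcd
    exact (Nat.Prime.one_lt p.2.1).ne'
      (Nat.eq_one_of_dvd_one (hgcd ▸ Nat.dvd_gcd hx hpg))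

theorem nonCoprime_connected_iff_gk_connected {G : Type*} [Group G] [Fintype G]
    (hG : 1 < Fintype.card G) :
    (nonCoprimeGraph G).Connected ↔ (gkGraph G).Connected := by
  constructor
  · intro hc
    obtain ⟨p0, hp0, hpd0⟩ := Nat.exists_prime_and_dvd hG.ne'
    rw [SimpleGraph.connected_iff]
    refine ⟨fun ⟨p, hp, hpd⟩ ⟨q, hq, hqd⟩ => ?_, ⟨⟨p0, hp0, hpd0⟩⟩⟩
    haveI := Fact.mk hp
    haveI := Fact.mk hq
    obtain ⟨g, hg⟩ := exists_prime_orderOf_dvd_card p hpd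
    obtain ⟨h, hh⟩ := exists_prime_orderOf_dvd_card q hqd
    have hg1 : g ≠ 1 := by
      intro h1; rw [h1, orderOf_one] at hg; exact hp.one_lt.ne' hg.symm
    have hh1 : h ≠ 1 := by
      intro h1; rw [h1, orderOf_one] at hh; exact hq.one_lt.ne' hh.symm
    obtain ⟨w⟩ := hc.preconnected ⟨g, hg1⟩ ⟨h, hh1⟩
    exact fwdWalk w p q hp hq (hg ▸ dvd_refl p) (hh ▸ dvd_refl q)
  · intro hc
    obtain ⟨x0, hx0⟩ := Fintype.exists_ne_of_one_lt_card hG 1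
    rw [SimpleGraph.connected_iff]
    refine ⟨fun x y => ?_, ⟨⟨x0, hx0⟩⟩⟩
    have hx : orderOf (x : G) ≠ 1 := fun h => x.2 (orderOf_eq_one_iff.mp h)
    have hy : orderOf (y : G) ≠ 1 := fun h => y.2 (orderOf_eq_one_iff.mp h)
    obtain ⟨p, hp, hpx⟩ := Nat.exists_prime_and_dvd hx
    obtain ⟨q, hq, hqy⟩ := Nat.exists_prime_and_dvd hy
    obtain ⟨w⟩ := hc.preconnected ⟨p, hp, hpx.trans orderOf_dvd_card⟩
      ⟨q, hq, hqy.trans orderOf_dvd_card⟩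
    exact bwdWalk w x y hpx hqy
end
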